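/- arXiv:1305.3738 — 8 statements merged into one kernel-verified Lean document; each statement's English description precedes it below -/
import Mathlib

section
/- Let I be a nonempty finite index set, M = (M_{j,k})_{j,k∈I} a real symmetric positive-semidefinite matrix, and (u_{j,k})_{j,k∈I} a symmetric matrix with entries in [0,∞) such that for all j ≠ k in I: (i) min_{ℓ∈I} u_{ℓ,ℓ} ≥ u_{j,k}, and (ii) for every q ∈ I \ {j,k}, u_{j,k} ≥ min(u_{j,q}, u_{k,q}). Then the entrywise (Hadamard) product matrix M^u with entries M^u_{j,k} = u_{j,k} M_{j,k} is symmetric positive-semidefinite. -/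
open Classical in
lemma equiv_ind_psd {I : Type*} [Fintype I] (M : I → I → ℝ)
    (hMpsd : ∀ x : I → ℝ, 0 ≤ ∑ j, ∑ k, M j k * x j * x k)
    (r : I → I → Prop) (hrefl : ∀ j, r j j) (hsym : ∀ j k, r j k → r k j)
    (htrans : ∀ j k l, r j k → r k l → r j l) (x : I → ℝ) :
    0 ≤ ∑ j, ∑ k, (if r j k then (1:ℝ) else 0) * M j k * x j * x k := by
  classical
  let s : Setoid I := ⟨r, ⟨hrefl, fun h => hsym _ _ h, fun h h' => htrans _ _ _ h h'⟩⟩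
  have hiff : ∀ j k, r j k ↔ Quotient.mk s j = Quotient.mk s k := by
    intro j k
    constructor
    · exact fun h => Quotient.sound h
    · exact fun h => Quotient.exact h
  have key : ∀ j k, (if r j k then (1:ℝ) else 0) * M j k * x j * x k =
      ∑ c : Quotient s, M j k * (if Quotient.mk s j = c then x j else 0) *
        (if Quotient.mk s k = c then x k else 0) := by
    intro j k
    rw [Finset.sum_eq_single (Quotient.mk s j)]
    · by_cases h : r j k
      · rw [if_pos h, if_pos rfl, if_pos ((hiff j k).mp h).symm]
        ring
      · rw [if_neg h, if_pos rfl, if_neg]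
        · ring
        · intro hc; exact h ((hiff j k).mpr hc.symm)
    · intro c _ hc
      rw [if_neg (Ne.symm hc)]; ring
    · intro h; exact absurd (Finset.mem_univ _) h
  calc ∑ j, ∑ k, (if r j k then (1:ℝ) else 0) * M j k * x j * x k
      = ∑ j, ∑ k, ∑ c : Quotient s, M j k * (if Quotient.mk s j = c then x j else 0) *
        (if Quotient.mk s k = c then x k else 0) := by
        exact Finset.sum_congr rfl fun j _ => Finset.sum_congr rfl fun k _ => key j k
    _ = ∑ j, ∑ c : Quotient s, ∑ k, M j k * (if Quotient.mk s j = c then x j else 0) *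
        (if Quotient.mk s k = c then x k else 0) := by
        exact Finset.sum_congr rfl fun j _ => Finset.sum_comm
    _ = ∑ c : Quotient s, ∑ j, ∑ k, M j k * (if Quotient.mk s j = c then x j else 0) *
        (if Quotient.mk s k = c then x k else 0) := Finset.sum_comm
    _ ≥ 0 := by
        apply Finset.sum_nonneg
        intro c _
        exact hMpsd (fun j => if Quotient.mk s j = c then x j else 0)

/-- Key induction: quadratic form nonnegativity, by induction on the number of
distinct positive values of `u`. -/
lemma key_ind {I : Type*} [Fintype I] :
    ∀ (n : ℕ) (M u : I → I → ℝ),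
    (∀ x : I → ℝ, 0 ≤ ∑ j, ∑ k, M j k * x j * x k) →
    (∀ j k, u j k = u k j) → (∀ j k, 0 ≤ u j k) →
    (∀ j k, j ≠ k → ∀ ℓ, u j k ≤ u ℓ ℓ) →
    (∀ j k, j ≠ k → ∀ q, q ≠ j → q ≠ k → min (u j q) (u k q) ≤ u j k) →
    ((Finset.univ.image (fun p : I × I => u p.1 p.2)).filter (fun v => 0 < v)).card ≤ n →
    ∀ x : I → ℝ, 0 ≤ ∑ j, ∑ k, u j k * M j k * x j * x k := by
  intro n
  induction n with
  | zero =>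
    intro M u hMpsd husymm hunonneg hcond1 hcond2 hcard x
    have hP : (Finset.univ.image (fun p : I × I => u p.1 p.2)).filter (fun v => 0 < v) = ∅ :=
      Finset.card_eq_zero.mp (Nat.le_zero.mp hcard)
    have hz : ∀ j k, u j k = 0 := by
      intro j k
      by_contra h
      have hpos : 0 < u j k := lt_of_le_of_ne (hunonneg j k) (Ne.symm h)
      have : u j k ∈ (Finset.univ.image (fun p : I × I => u p.1 p.2)).filter (fun v => 0 < v) := by
        refine Finset.mem_filter.mpr ⟨Finset.mem_image.mpr ⟨(j, k), Finset.mem_univ _, rfl⟩, hpos⟩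
      rw [hP] at this
      exact absurd this (Finset.notMem_empty _)
    have : ∑ j, ∑ k, u j k * M j k * x j * x k = 0 := by
      apply Finset.sum_eq_zero; intro j _
      apply Finset.sum_eq_zero; intro k _
      rw [hz j k]; ring
    linarith
  | succ n ih =>
    intro M u hMpsd husymm hunonneg hcond1 hcond2 hcard x
    classical
    set P := (Finset.univ.image (fun p : I × I => u p.1 p.2)).filter (fun v => 0 < v) with hPdef
    by_cases hPne : P.Nonempty
    case neg =>
      -- all entries zero
      have hz : ∀ j k, u j k = 0 := by
        intro j k
        by_contra h
        have hpos : 0 < u j k := lt_of_le_of_ne (hunonneg j k) (Ne.symm h)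
        exact hPne ⟨u j k, Finset.mem_filter.mpr
          ⟨Finset.mem_image.mpr ⟨(j, k), Finset.mem_univ _, rfl⟩, hpos⟩⟩
      have : ∑ j, ∑ k, u j k * M j k * x j * x k = 0 := by
        apply Finset.sum_eq_zero; intro j _
        apply Finset.sum_eq_zero; intro k _
        rw [hz j k]; ring
      linarith
    case pos =>
      set m := P.min' hPne with hmdef
      have hmP : m ∈ P := P.min'_mem hPne
      have hmpos : 0 < m := (Finset.mem_filter.mp hmP).2
      have hmle : ∀ j k, 0 < u j k → m ≤ u j k := by
        intro j k h
        exact P.min'_le _ (Finset.mem_filter.mpr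
          ⟨Finset.mem_image.mpr ⟨(j, k), Finset.mem_univ _, rfl⟩, h⟩)
      set u' : I → I → ℝ := fun j k => if 0 < u j k then u j k - m else 0 with hu'def
      have hu'nonneg : ∀ j k, 0 ≤ u' j k := by
        intro j k
        simp only [hu'def]
        split_ifs with h
        · linarith [hmle j k h]
        · exact le_refl 0
      have hu'symm : ∀ j k, u' j k = u' k j := by
        intro j k; simp only [hu'def, husymm j k]
      have hdecomp : ∀ j k, u j k = u' j k + m * (if 0 < u j k then 1 else 0) := by
        intro j k
        simp only [hu'def]
        split_ifs with h
        · ring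
        · have : u j k = 0 := le_antisymm (not_lt.mp h) (hunonneg j k)
          rw [this]; ring
      have hu'cond1 : ∀ j k, j ≠ k → ∀ ℓ, u' j k ≤ u' ℓ ℓ := by
        intro j k hjk ℓ
        by_cases h : 0 < u j k
        · have h2 : 0 < u ℓ ℓ := lt_of_lt_of_le h (hcond1 j k hjk ℓ)
          simp only [hu'def, if_pos h, if_pos h2]
          linarith [hcond1 j k hjk ℓ]
        · simp only [hu'def, if_neg h]
          exact hu'nonneg ℓ ℓ
      have hu'le : ∀ j k j' k', u j k ≤ u j' k' → u' j k ≤ u' j' k' := by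
        intro j k j' k' h
        by_cases h1 : 0 < u j k
        · have h2 : 0 < u j' k' := lt_of_lt_of_le h1 h
          simp only [hu'def, if_pos h1, if_pos h2]
          linarith
        · simp only [hu'def, if_neg h1]
          exact hu'nonneg j' k'
      have hu'cond2 : ∀ j k, j ≠ k → ∀ q, q ≠ j → q ≠ k →
          min (u' j q) (u' k q) ≤ u' j k := by
        intro j k hjk q hq1 hq2
        rcases min_le_iff.mp (hcond2 j k hjk q hq1 hq2) with h | h
        · exact min_le_of_left_le (hu'le j q j k h)
        · exact min_le_of_right_le (hu'le k q j k h)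
      have hu'card : ((Finset.univ.image (fun p : I × I => u' p.1 p.2)).filter
          (fun v => 0 < v)).card ≤ n := by
        have hsub : (Finset.univ.image (fun p : I × I => u' p.1 p.2)).filter (fun v => 0 < v)
            ⊆ (P.erase m).image (fun v => v - m) := by
          intro v hv
          obtain ⟨hv1, hv2⟩ := Finset.mem_filter.mp hv
          obtain ⟨p, _, hp⟩ := Finset.mem_image.mp hv1
          by_cases h : 0 < u p.1 p.2
          · have hpv : v = u p.1 p.2 - m := by rw [← hp]; simp only [hu'def, if_pos h]
            have hgt : m < u p.1 p.2 := by rw [hpv] at hv2; linarith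
            refine Finset.mem_image.mpr ⟨u p.1 p.2, Finset.mem_erase.mpr
              ⟨ne_of_gt hgt, Finset.mem_filter.mpr
                ⟨Finset.mem_image.mpr ⟨p, Finset.mem_univ _, rfl⟩, h⟩⟩, by rw [hpv]⟩
          · exfalso
            have : v = 0 := by rw [← hp]; simp only [hu'def, if_neg h]
            rw [this] at hv2; exact lt_irrefl 0 hv2
        calc ((Finset.univ.image (fun p : I × I => u' p.1 p.2)).filter (fun v => 0 < v)).card
            ≤ ((P.erase m).image (fun v => v - m)).card := Finset.card_le_card hsub
          _ ≤ (P.erase m).card := Finset.card_image_le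
          _ = P.card - 1 := Finset.card_erase_of_mem hmP
          _ ≤ n := by omega
      have hterm1 : 0 ≤ ∑ j, ∑ k, u' j k * M j k * x j * x k :=
        ih M u' hMpsd hu'symm hu'nonneg hu'cond1 hu'cond2 hu'card x
      -- indicator part
      set r : I → I → Prop := fun j k => j = k ∨ 0 < u j k with hrdef
      have hrrefl : ∀ j, r j j := fun j => Or.inl rfl
      have hrsym : ∀ j k, r j k → r k j := by
        intro j k h
        rcases h with h | h
        · exact Or.inl h.symm
        · exact Or.inr (by rwa [← husymm])
      have hrtrans : ∀ j k l, r j k → r k l → r j l := by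
        intro j k l h1 h2
        rcases h1 with h1 | h1
        · rwa [h1]
        rcases h2 with h2 | h2
        · exact Or.inr (h2 ▸ h1)
        by_cases hjl : j = l
        · exact Or.inl hjl
        by_cases hkj : k = j
        · exact Or.inr (by rwa [hkj] at h2)
        by_cases hkl : k = l
        · exact Or.inr (by rwa [hkl] at h1)
        · refine Or.inr (lt_of_lt_of_le ?_ (hcond2 j l hjl k hkj hkl))
          rw [lt_min_iff]
          exact ⟨h1, by rwa [husymm k l] at h2⟩
      set y : I → ℝ := fun j => if 0 < u j j then x j else 0 with hydef
      have hind0 : 0 ≤ ∑ j, ∑ k, (if r j k then (1:ℝ) else 0) * M j k * y j * y k := by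
        have h := equiv_ind_psd M hMpsd r hrrefl hrsym hrtrans y
        convert h using 5
        all_goals split_ifs <;> rfl
      have hind_eq : ∑ j, ∑ k, (if 0 < u j k then (1:ℝ) else 0) * M j k * x j * x k
          = ∑ j, ∑ k, (if r j k then (1:ℝ) else 0) * M j k * y j * y k := by
        apply Finset.sum_congr rfl; intro j _
        apply Finset.sum_congr rfl; intro k _
        by_cases hjk : j = k
        · subst hjk
          rw [if_pos (hrrefl j)]
          simp only [hydef]
          split_ifs with h
          · ring
          · ring
        · by_cases h : 0 < u j k
          · have hj : 0 < u j j := lt_of_lt_of_le h (hcond1 j k hjk j)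
            have hk : 0 < u k k := lt_of_lt_of_le h (hcond1 j k hjk k)
            rw [if_pos h, if_pos (Or.inr h)]
            simp only [hydef, if_pos hj, if_pos hk]
          · rw [if_neg h, if_neg (by rintro (h' | h') <;> [exact hjk h'; exact h h'])]
            ring
      have hterm2 : 0 ≤ ∑ j, ∑ k, m * ((if 0 < u j k then (1:ℝ) else 0) * M j k * x j * x k) := by
        have : ∑ j, ∑ k, m * ((if 0 < u j k then (1:ℝ) else 0) * M j k * x j * x k)
            = m * ∑ j, ∑ k, (if 0 < u j k then (1:ℝ) else 0) * M j k * x j * x k := by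
          rw [Finset.mul_sum]
          exact Finset.sum_congr rfl fun j _ => (Finset.mul_sum _ _ _).symm
        rw [this, hind_eq]
        exact mul_nonneg hmpos.le hind0
      have hsplit : ∑ j, ∑ k, u j k * M j k * x j * x k
          = (∑ j, ∑ k, u' j k * M j k * x j * x k)
            + ∑ j, ∑ k, m * ((if 0 < u j k then (1:ℝ) else 0) * M j k * x j * x k) := by
        rw [← Finset.sum_add_distrib]
        apply Finset.sum_congr rfl; intro j _
        rw [← Finset.sum_add_distrib]
        apply Finset.sum_congr rfl; intro k _
        conv_lhs => rw [hdecomp j k]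
        ring
      rw [hsplit]
      linarith

theorem hadamard_tree_psd {I : Type*} [Fintype I] [Nonempty I]
    (M u : I → I → ℝ)
    (hMsymm : ∀ j k, M j k = M k j)
    (hMpsd : ∀ x : I → ℝ, 0 ≤ ∑ j, ∑ k, M j k * x j * x k)
    (husymm : ∀ j k, u j k = u k j)
    (hunonneg : ∀ j k, 0 ≤ u j k)
    (hcond1 : ∀ j k, j ≠ k → ∀ ℓ, u j k ≤ u ℓ ℓ)
    (hcond2 : ∀ j k, j ≠ k → ∀ q, q ≠ j → q ≠ k → min (u j q) (u k q) ≤ u j k) :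
    (∀ j k, u j k * M j k = u k j * M k j) ∧
    (∀ x : I → ℝ, 0 ≤ ∑ j, ∑ k, u j k * M j k * x j * x k) := by
  constructor
  · intro j k; rw [husymm j k, hMsymm j k]
  · exact key_ind _ M u hMpsd husymm hunonneg hcond1 hcond2 le_rfl
end

section
/- For every real x and all real numbers A, B with 0 ≤ A < B ≤ 1, one has sinh(xA)·sinh(x(1−B))/(x·sinh(x)) ≤ 1/4, where the expression is interpreted by its limit A(1−B) ≤ 1/4 when x = 0. -/
lemma my_sinh_le_mul_cosh {t : ℝ} (ht : 0 ≤ t) : Real.sinh t ≤ t * Real.cosh t := by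
  have h : MonotoneOn (fun s : ℝ => s * Real.cosh s - Real.sinh s) (Set.Ici 0) := by
    apply monotoneOn_of_deriv_nonneg (convex_Ici 0)
    · exact ((continuous_id.mul Real.continuous_cosh).sub Real.continuous_sinh).continuousOn
    · intro s _
      exact ((differentiableAt_id.mul Real.differentiable_cosh.differentiableAt).sub
        Real.differentiable_sinh.differentiableAt).differentiableWithinAt
    · intro s hs
      have hs' : 0 < s := by simpa using hs
      have : deriv (fun s : ℝ => s * Real.cosh s - Real.sinh s) s = s * Real.sinh s := by
        rw [deriv_fun_sub, deriv_fun_mul] <;>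
          simp [Real.deriv_cosh, Real.deriv_sinh, Real.differentiable_cosh.differentiableAt,
            Real.differentiable_sinh.differentiableAt,
            differentiableAt_id.mul Real.differentiable_cosh.differentiableAt]
      · rw [this]
        exact mul_nonneg hs'.le (Real.sinh_nonneg_iff.2 hs'.le)
  have h0 := h (Set.self_mem_Ici) ht ht
  simp at h0
  linarith

lemma my_aux (x A B : ℝ) (hx : 0 < x) (hA : 0 ≤ A) (hAB : A < B) (hB : B ≤ 1) :
    Real.sinh (x * A) * Real.sinh (x * (1 - B)) ≤ 1 / 4 * (x * Real.sinh x) := by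
  set a := x * A with ha
  set b := x * (1 - B) with hb
  have hprod : Real.sinh a * Real.sinh b = (Real.cosh (a + b) - Real.cosh (a - b)) / 2 := by
    rw [Real.cosh_add, Real.cosh_sub]; ring
  have hab : a + b ≤ x := by
    have : a + b = x * (1 + A - B) := by rw [ha, hb]; ring
    nlinarith
  have habnn : 0 ≤ a + b := by
    have : a + b = x * (1 + A - B) := by rw [ha, hb]; ring
    nlinarith
  have hcosh : Real.cosh (a + b) ≤ Real.cosh x := by
    rw [Real.cosh_le_cosh, abs_of_nonneg habnn, abs_of_nonneg hx.le]; exact hab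
  have h1 : Real.sinh a * Real.sinh b ≤ (Real.cosh x - 1) / 2 := by
    have := Real.one_le_cosh (a - b)
    rw [hprod]; linarith
  -- cosh x - 1 = 2 * sinh(x/2)^2
  have hx2 : 2 * (x / 2) = x := by ring
  have hch : Real.cosh x = 2 * Real.sinh (x / 2) ^ 2 + 1 := by
    have h := Real.cosh_two_mul (x / 2)
    have h2 := Real.cosh_sq (x / 2)
    rw [hx2] at h
    nlinarith
  have hsh : Real.sinh x = 2 * Real.sinh (x / 2) * Real.cosh (x / 2) := by
    have h := Real.sinh_two_mul (x / 2)
    rwa [hx2] at h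
  have hle := my_sinh_le_mul_cosh (t := x / 2) (by linarith)
  have hsnn : 0 ≤ Real.sinh (x / 2) := Real.sinh_nonneg_iff.2 (by linarith)
  have h2 : Real.sinh (x / 2) ^ 2 ≤ (x / 2 * Real.cosh (x / 2)) * Real.sinh (x / 2) := by
    nlinarith
  calc Real.sinh a * Real.sinh b ≤ (Real.cosh x - 1) / 2 := h1
    _ = Real.sinh (x / 2) ^ 2 := by rw [hch]; ring
    _ ≤ 1 / 4 * (x * Real.sinh x) := by rw [hsh]; nlinarith

theorem sinh_quotient_le_quarter (x A B : ℝ) (hA : 0 ≤ A) (hAB : A < B) (hB : B ≤ 1) :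
    (if x = 0 then A * (1 - B)
      else Real.sinh (x * A) * Real.sinh (x * (1 - B)) / (x * Real.sinh x)) ≤ 1 / 4 := by
  split_ifs with hx
  · nlinarith [sq_nonneg (2 * B - 1), mul_nonneg (sub_pos.2 hAB).le (sub_nonneg.2 hB)]
  · have hd : 0 < x * Real.sinh x := by
      rcases lt_or_gt_of_ne hx with h | h
      · exact mul_pos_of_neg_of_neg h (Real.sinh_neg_iff.2 h)
      · exact mul_pos h (Real.sinh_pos_iff.2 h)
    rw [div_le_iff₀ hd]
    rcases lt_or_gt_of_ne hx with h | h
    · have := my_aux (-x) A B (by linarith) hA hAB hB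
      simp only [neg_mul, Real.sinh_neg, mul_neg, neg_mul, neg_neg] at this
      linarith
    · exact my_aux x A B h hA hAB hB
end

section
/- Let m ≥ 1, α = (α_1,…,α_m) ∈ ℕ^m, a_1,…,a_m ≥ 0, and λ a positive integer. Set |α| = α_1 + ⋯ + α_m. Then (a_1^{α_1}/α_1!)···(a_m^{α_m}/α_m!)·(a_1^λ + ⋯ + a_m^λ) ≤ (|α| + m)·(|α| + λ)^{λ−1}·exp(a_1 + ⋯ + a_m). -/
private lemma fact_le_aux (n lam : ℕ) (hlam : 1 ≤ lam) :
    (n + lam).factorial ≤ n.factorial * (n + 1) * (n + lam) ^ (lam - 1) := by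
  induction lam with
  | zero => omega
  | succ k ih =>
    rcases Nat.eq_or_lt_of_le hlam with h | h
    · simp [← h, Nat.factorial_succ, mul_comm]
    · have hk : 1 ≤ k := by omega
      have ihk := ih hk
      calc (n + (k + 1)).factorial = (n + k + 1) * (n + k).factorial := by
            rw [show n + (k+1) = (n+k) + 1 by ring, Nat.factorial_succ]
        _ ≤ (n + k + 1) * (n.factorial * (n + 1) * (n + k) ^ (k - 1)) :=
            Nat.mul_le_mul_left _ ihk
        _ ≤ (n + (k + 1)) * (n.factorial * (n + 1) * (n + (k + 1)) ^ (k - 1)) := by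
            apply Nat.mul_le_mul (by omega)
            exact Nat.mul_le_mul_left _ (Nat.pow_le_pow_left (by omega) _)
        _ = n.factorial * (n + 1) * (n + (k + 1)) ^ (k + 1 - 1) := by
            rw [show k + 1 - 1 = (k - 1) + 1 by omega, pow_succ]; ring

private lemma single_var (n lam : ℕ) (hlam : 1 ≤ lam) (x : ℝ) (hx : 0 ≤ x) :
    x ^ n / n.factorial * x ^ lam ≤ (n + 1) * (n + lam) ^ (lam - 1) * Real.exp x := by
  have h1 : x ^ n / n.factorial * x ^ lam
      = ((n + lam).factorial / n.factorial) * (x ^ (n + lam) / (n + lam).factorial) := by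
    rw [pow_add]
    have h0 : (n.factorial : ℝ) ≠ 0 := by positivity
    have h0' : ((n + lam).factorial : ℝ) ≠ 0 := by positivity
    field_simp
  rw [h1]
  have h2 : x ^ (n + lam) / (n + lam).factorial ≤ Real.exp x :=
    Real.pow_div_factorial_le_exp x hx _
  have h3 : ((n + lam).factorial : ℝ) / n.factorial ≤ (n + 1) * (n + lam) ^ (lam - 1) := by
    rw [div_le_iff₀ (by positivity)]
    have := fact_le_aux n lam hlam
    have := (Nat.cast_le (α := ℝ)).2 this
    push_cast at this ⊢
    linarith
  have hnn : (0:ℝ) ≤ ((n + lam).factorial : ℝ) / n.factorial :=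
    div_nonneg (Nat.cast_nonneg _) (Nat.cast_nonneg _)
  calc ((n + lam).factorial / n.factorial : ℝ) * (x ^ (n + lam) / (n + lam).factorial)
      ≤ ((n + lam).factorial / n.factorial : ℝ) * Real.exp x :=
        mul_le_mul_of_nonneg_left h2 hnn
    _ ≤ (n + 1) * (n + lam) ^ (lam - 1) * Real.exp x :=
        mul_le_mul_of_nonneg_right h3 (Real.exp_pos x).le

theorem prod_pow_div_factorial_mul_sum_pow_le (m : ℕ) (hm : 1 ≤ m)
    (α : Fin m → ℕ) (a : Fin m → ℝ) (ha : ∀ i, 0 ≤ a i)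
    (lam : ℕ) (hlam : 1 ≤ lam) :
    (∏ i, a i ^ α i / (α i).factorial) * (∑ i, a i ^ lam) ≤
      ((∑ i, (α i : ℝ)) + m) * ((∑ i, (α i : ℝ)) + lam) ^ (lam - 1) *
        Real.exp (∑ i, a i) := by
  set S : ℝ := ∑ i, (α i : ℝ) with hS
  have hSnn : 0 ≤ S := Finset.sum_nonneg fun i _ => Nat.cast_nonneg _
  have hb : ∀ i, (0:ℝ) ≤ a i ^ α i / (α i).factorial := fun i => div_nonneg (pow_nonneg (ha i) _) (Nat.cast_nonneg _)
  rw [Finset.mul_sum]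
  have key : ∀ i : Fin m,
      (∏ j, a j ^ α j / (α j).factorial) * a i ^ lam ≤
        ((α i : ℝ) + 1) * (S + lam) ^ (lam - 1) * Real.exp (∑ j, a j) := by
    intro i
    have hmem : i ∈ Finset.univ := Finset.mem_univ i
    rw [← Finset.mul_prod_erase Finset.univ _ hmem]
    have hrest : ∏ j ∈ Finset.univ.erase i, a j ^ α j / (α j).factorial ≤
        ∏ j ∈ Finset.univ.erase i, Real.exp (a j) := by
      apply Finset.prod_le_prod (fun j _ => hb j)
      intro j _
      have h := Real.pow_div_factorial_le_exp (a j) (ha j) (α j)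
      simpa using h
    have hexp : Real.exp (a i) * ∏ j ∈ Finset.univ.erase i, Real.exp (a j)
        = Real.exp (∑ j, a j) := by
      rw [← Real.exp_sum, ← Real.exp_add, Finset.add_sum_erase _ _ hmem]
    have h1 : (a i ^ α i / (α i).factorial * ∏ j ∈ Finset.univ.erase i,
          a j ^ α j / (α j).factorial) * a i ^ lam
        = (a i ^ α i / (α i).factorial * a i ^ lam) * ∏ j ∈ Finset.univ.erase i,
          a j ^ α j / (α j).factorial := by ring
    rw [h1]
    have hsingle := single_var (α i) lam hlam (a i) (ha i)
    have hprodnn : (0:ℝ) ≤ ∏ j ∈ Finset.univ.erase i, a j ^ α j / (α j).factorial :=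
      Finset.prod_nonneg fun j _ => hb j
    calc (a i ^ α i / (α i).factorial * a i ^ lam) * ∏ j ∈ Finset.univ.erase i,
          a j ^ α j / (α j).factorial
        ≤ (((α i : ℝ) + 1) * ((α i : ℝ) + lam) ^ (lam - 1) * Real.exp (a i)) *
            ∏ j ∈ Finset.univ.erase i, Real.exp (a j) := by
          apply mul_le_mul hsingle hrest hprodnn (by positivity)
      _ = ((α i : ℝ) + 1) * ((α i : ℝ) + lam) ^ (lam - 1) *
            (Real.exp (a i) * ∏ j ∈ Finset.univ.erase i, Real.exp (a j)) := by ring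
      _ = ((α i : ℝ) + 1) * ((α i : ℝ) + lam) ^ (lam - 1) * Real.exp (∑ j, a j) := by
          rw [hexp]
      _ ≤ ((α i : ℝ) + 1) * (S + lam) ^ (lam - 1) * Real.exp (∑ j, a j) := by
          apply mul_le_mul_of_nonneg_right _ (Real.exp_pos _).le
          apply mul_le_mul_of_nonneg_left _ (by positivity)
          apply pow_le_pow_left₀ (by positivity)
          have : (α i : ℝ) ≤ S := Finset.single_le_sum
            (fun j _ => (Nat.cast_nonneg (α j) : (0:ℝ) ≤ α j)) hmem
          linarith
  calc ∑ i, (∏ j, a j ^ α j / (α j).factorial) * a i ^ lam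
      ≤ ∑ i, ((α i : ℝ) + 1) * (S + lam) ^ (lam - 1) * Real.exp (∑ j, a j) :=
        Finset.sum_le_sum fun i _ => key i
    _ = (S + m) * (S + lam) ^ (lam - 1) * Real.exp (∑ j, a j) := by
        rw [← Finset.sum_mul, ← Finset.sum_mul, Finset.sum_add_distrib]
        simp [hS]
end

section
/- Let ω > 0, t > 0, and s ∈ [0,1]. Define ϖ(s) := (sinh(ωts) + sinh(ωt(1−s)))/sinh(ωt). Then 1/cosh(ωt/2) ≤ ϖ(s) ≤ 1. -/
theorem varpi_bounds (ω t s : ℝ) (hω : 0 < ω) (ht : 0 < t) (hs : s ∈ Set.Icc (0:ℝ) 1) :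
    1 / Real.cosh (ω * t / 2) ≤
      (Real.sinh (ω * t * s) + Real.sinh (ω * t * (1 - s))) / Real.sinh (ω * t) ∧
    (Real.sinh (ω * t * s) + Real.sinh (ω * t * (1 - s))) / Real.sinh (ω * t) ≤ 1 := by
  obtain ⟨hs0, hs1⟩ := hs
  set x : ℝ := ω * t / 2 with hx
  set y : ℝ := ω * t * (s - 1/2) with hy
  have hx0 : 0 < x := by positivity
  have hshx : 0 < Real.sinh x := by positivity
  have hchx : 0 < Real.cosh x := Real.cosh_pos x
  have h1 : ω * t * s = x + y := by rw [hx, hy]; ring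
  have h2 : ω * t * (1 - s) = x - y := by rw [hx, hy]; ring
  have h3 : ω * t = x + x := by rw [hx]; ring
  have hnum : Real.sinh (ω * t * s) + Real.sinh (ω * t * (1 - s)) =
      2 * Real.sinh x * Real.cosh y := by
    rw [h1, h2, Real.sinh_add, Real.sinh_sub]; ring
  have hden : Real.sinh (ω * t) = 2 * Real.sinh x * Real.cosh x := by
    rw [h3, Real.sinh_add]; ring
  have hratio : (Real.sinh (ω * t * s) + Real.sinh (ω * t * (1 - s))) / Real.sinh (ω * t)
      = Real.cosh y / Real.cosh x := by
    rw [hnum, hden]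
    field_simp
  rw [hratio]
  have hyx : |y| ≤ |x| := by
    rw [abs_of_pos hx0, hy, hx, abs_mul]
    have h4 : |s - 1/2| ≤ 1/2 := by
      rw [abs_le]; constructor <;> linarith
    have h5 : |ω * t| = ω * t := abs_of_pos (by positivity)
    rw [h5]
    nlinarith [mul_le_mul_of_nonneg_left h4 (le_of_lt (by positivity : (0:ℝ) < ω * t))]
  have hcle : Real.cosh y ≤ Real.cosh x := by
    rw [← Real.cosh_abs y, ← Real.cosh_abs x]
    exact Real.cosh_le_cosh.2 (by rwa [abs_abs, abs_abs])
  constructor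
  · gcongr
    exact Real.one_le_cosh y
  · exact (div_le_one hchx).2 hcle
end

section
/- Let J(z) := ∑_{n≥0} (−1)^n z^n / (n!)^2. Then for every B ≥ 0 and every complex σ, |J(Bσ)| ≤ exp(2 B^{1/2} |Im(σ^{1/2})|), where σ^{1/2} is the principal square root. -/
open MeasureTheory intervalIntegral Finset

lemma prod_ratio (m : ℕ) :
    ∏ i ∈ Finset.range m, ((2*(i:ℝ)+1)/(2*(i:ℝ)+2))
      = ((2*m).factorial : ℝ) / (4^m * ((m.factorial : ℝ))^2) := by
  induction m with
  | zero => simp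
  | succ k ih =>
    rw [Finset.prod_range_succ, ih]
    have h1 : ((2*(k+1)).factorial : ℝ) = (2*(k:ℝ)+2) * ((2*(k:ℝ)+1) * ((2*k).factorial : ℝ)) := by
      have h : 2*(k+1) = (2*k+1)+1 := by ring
      rw [h, Nat.factorial_succ, Nat.factorial_succ]; push_cast; ring
    have h2 : (((k+1).factorial : ℝ)) = ((k:ℝ)+1) * (k.factorial : ℝ) := by
      rw [Nat.factorial_succ]; push_cast; ring
    have hk : ((2*k).factorial : ℝ) ≠ 0 := Nat.cast_ne_zero.2 (Nat.factorial_ne_zero _)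
    have hk2 : ((k.factorial : ℝ)) ≠ 0 := Nat.cast_ne_zero.2 (Nat.factorial_ne_zero _)
    rw [h1, h2]
    field_simp
    ring

lemma sin_int_two_pi (k : ℕ) :
    ∫ θ in (0:ℝ)..(2*Real.pi), Real.sin θ ^ k
      = (1 + (-1:ℝ)^k) * ∫ θ in (0:ℝ)..Real.pi, Real.sin θ ^ k := by
  have h2 : ∫ θ in Real.pi..(2*Real.pi), Real.sin θ ^ k
      = (-1:ℝ)^k * ∫ θ in (0:ℝ)..Real.pi, Real.sin θ ^ k := by
    have h := intervalIntegral.integral_comp_add_right (a := (0:ℝ)) (b := Real.pi)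
      (fun x => Real.sin x ^ k) Real.pi
    rw [zero_add, show Real.pi + Real.pi = 2*Real.pi by ring] at h
    rw [← h, ← intervalIntegral.integral_const_mul]
    apply intervalIntegral.integral_congr
    intro x _
    show Real.sin (x + Real.pi) ^ k = (-1:ℝ) ^ k * Real.sin x ^ k
    rw [Real.sin_add_pi, neg_pow]
  have hi1 : IntervalIntegrable (fun θ => Real.sin θ ^ k) volume 0 Real.pi :=
    (Real.continuous_sin.pow k).intervalIntegrable _ _
  have hi2 : IntervalIntegrable (fun θ => Real.sin θ ^ k) volume Real.pi (2*Real.pi) :=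
    (Real.continuous_sin.pow k).intervalIntegrable _ _
  rw [← intervalIntegral.integral_add_adjacent_intervals hi1 hi2, h2]
  ring

lemma J_sq_bound (w : ℂ) :
    ‖∑' n : ℕ, (-1) ^ n * (w ^ 2) ^ n / ((n.factorial : ℂ) ^ 2)‖ ≤
      Real.exp (2 * |w.im|) := by
  set c : ℂ := 2 * Complex.I * w with hc
  set g : ℕ → ℝ → ℂ := fun k θ => (c * Real.sin θ) ^ k / (k.factorial : ℂ) with hg
  have two_pi_pos : (0:ℝ) < 2 * Real.pi := by positivity
  -- measurability
  have hcont : ∀ k, Continuous (g k) := fun k =>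
    (((continuous_const.mul (Complex.continuous_ofReal.comp Real.continuous_sin)).pow k).div_const _)
  have hmeas : ∀ k, AEStronglyMeasurable (g k) (volume.restrict (Set.Ioc (0:ℝ) (2*Real.pi))) :=
    fun k => (hcont k).aestronglyMeasurable
  -- uniform norm bound
  have hnorm : ∀ (k : ℕ) (θ : ℝ), ‖g k θ‖ ≤ (2*‖w‖)^k / (k.factorial : ℝ) := by
    intro k θ
    have hfac : ‖((k.factorial : ℕ) : ℂ)‖ = (k.factorial : ℝ) := by
      simp
    rw [show g k θ = (c * Real.sin θ) ^ k / (k.factorial : ℂ) from rfl, norm_div, norm_pow, hfac]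
    gcongr
    calc ‖c * (Real.sin θ : ℂ)‖ = ‖c‖ * |Real.sin θ| := by
            rw [norm_mul, Complex.norm_real, Real.norm_eq_abs]
        _ ≤ (2*‖w‖) * 1 := by
            apply mul_le_mul _ (Real.abs_sin_le_one θ) (abs_nonneg _) (by positivity)
            rw [hc]
            simp [norm_mul]
        _ = 2*‖w‖ := mul_one _
  have hsum : Summable (fun k : ℕ => (2*‖w‖)^k / (k.factorial : ℝ) * (2*Real.pi)) :=
    (Real.summable_pow_div_factorial _).mul_right _
  -- lintegral finiteness
  have hlint : ∑' k : ℕ, ∫⁻ θ in Set.Ioc (0:ℝ) (2*Real.pi), ‖g k θ‖₊ ∂volume ≠ ⊤ := by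
    have hb : ∀ k : ℕ, ∫⁻ θ in Set.Ioc (0:ℝ) (2*Real.pi), (‖g k θ‖₊ : ENNReal) ∂volume
        ≤ ENNReal.ofReal ((2*‖w‖)^k / (k.factorial : ℝ) * (2*Real.pi)) := by
      intro k
      calc ∫⁻ θ in Set.Ioc (0:ℝ) (2*Real.pi), (‖g k θ‖₊ : ENNReal) ∂volume
          ≤ ∫⁻ _ in Set.Ioc (0:ℝ) (2*Real.pi),
              ENNReal.ofReal ((2*‖w‖)^k / (k.factorial : ℝ)) ∂volume := by
            refine lintegral_mono fun θ => ?_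
            rw [← ENNReal.ofReal_coe_nnreal, coe_nnnorm]
            exact ENNReal.ofReal_le_ofReal (hnorm k θ)
        _ = ENNReal.ofReal ((2*‖w‖)^k / (k.factorial : ℝ))
              * volume (Set.Ioc (0:ℝ) (2*Real.pi)) := by
            rw [lintegral_const, Measure.restrict_apply MeasurableSet.univ, Set.univ_inter]
        _ = ENNReal.ofReal ((2*‖w‖)^k / (k.factorial : ℝ) * (2*Real.pi)) := by
            rw [Real.volume_Ioc, sub_zero, ← ENNReal.ofReal_mul (by positivity)]
    refine ne_top_of_le_ne_top ?_ (ENNReal.tsum_le_tsum hb)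
    rw [← ENNReal.ofReal_tsum_of_nonneg (fun k => by positivity) hsum]
    exact ENNReal.ofReal_ne_top
  -- the swap
  have hswap := MeasureTheory.integral_tsum hmeas hlint
  -- pointwise sum is exp
  have hpt : ∀ θ : ℝ, ∑' k : ℕ, g k θ = Complex.exp (c * Real.sin θ) := by
    intro θ
    rw [Complex.exp_eq_exp_ℂ, NormedSpace.exp_eq_tsum_div]
  -- value of each integral
  have hFk : ∀ k : ℕ, ∫ θ in Set.Ioc (0:ℝ) (2*Real.pi), g k θ ∂volume
      = c ^ k / (k.factorial : ℂ) * ((∫ θ in (0:ℝ)..(2*Real.pi), Real.sin θ ^ k : ℝ) : ℂ) := by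
    intro k
    rw [← intervalIntegral.integral_of_le two_pi_pos.le]
    have : ∀ θ : ℝ, g k θ = c ^ k / (k.factorial : ℂ) * (((Real.sin θ ^ k : ℝ)) : ℂ) := by
      intro θ
      show (c * Real.sin θ) ^ k / (k.factorial : ℂ) = _
      push_cast
      rw [mul_pow]
      ring
    simp_rw [this]
    rw [intervalIntegral.integral_const_mul, intervalIntegral.integral_ofReal]
  -- odd moments vanish
  have hodd : ∀ k : ℕ, k ∉ Set.range (fun m : ℕ => 2 * m) →
      (∫ θ in Set.Ioc (0:ℝ) (2*Real.pi), g k θ ∂volume) = 0 := by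
    intro k hk
    have hkodd : Odd k := by
      rcases Nat.even_or_odd k with he | ho
      · obtain ⟨j, hj⟩ := he
        exact absurd ⟨j, by show 2 * j = k; omega⟩ hk
      · exact ho
    rw [hFk k, sin_int_two_pi, hkodd.neg_one_pow]
    norm_num
  -- even moments
  have hcsq : c ^ 2 = -4 * w ^ 2 := by
    rw [hc, mul_pow, mul_pow, Complex.I_sq]
    ring
  have heven : ∀ m : ℕ, (∫ θ in Set.Ioc (0:ℝ) (2*Real.pi), g (2*m) θ ∂volume)
      = ((2*Real.pi : ℝ) : ℂ) * ((-1) ^ m * (w ^ 2) ^ m / ((m.factorial : ℂ) ^ 2)) := by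
    intro m
    rw [hFk (2*m), sin_int_two_pi, Even.neg_one_pow ⟨m, by ring⟩,
      integral_sin_pow_even, prod_ratio]
    have hc2m : c ^ (2*m) = (-1:ℂ) ^ m * 4 ^ m * (w ^ 2) ^ m := by
      rw [pow_mul, hcsq, show (-4 * w ^ 2 : ℂ) = (-1) * 4 * w ^ 2 by ring, mul_pow, mul_pow]
    rw [hc2m]
    have h1 : (((2*m).factorial : ℕ) : ℂ) ≠ 0 := Nat.cast_ne_zero.2 (Nat.factorial_ne_zero _)
    have h2 : ((m.factorial : ℕ) : ℂ) ≠ 0 := Nat.cast_ne_zero.2 (Nat.factorial_ne_zero _)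
    have h4 : ((4:ℂ)) ^ m ≠ 0 := pow_ne_zero _ (by norm_num)
    push_cast
    field_simp
    ring
  -- reindex over even integers
  have hinj : Function.Injective (fun m : ℕ => 2 * m) := fun a b h => by
    have h' : 2 * a = 2 * b := h
    omega
  have hsupp : Function.support (fun k => ∫ θ in Set.Ioc (0:ℝ) (2*Real.pi), g k θ ∂volume)
      ⊆ Set.range (fun m : ℕ => 2 * m) := by
    intro k hkk
    by_contra hk
    exact hkk (hodd k hk)
  have h2 : ∑' m : ℕ, (∫ θ in Set.Ioc (0:ℝ) (2*Real.pi), g (2*m) θ ∂volume)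
      = ∑' k : ℕ, (∫ θ in Set.Ioc (0:ℝ) (2*Real.pi), g k θ ∂volume) :=
    hinj.tsum_eq hsupp
  have key : ∫ θ in Set.Ioc (0:ℝ) (2*Real.pi), Complex.exp (c * Real.sin θ) ∂volume
      = ((2*Real.pi : ℝ) : ℂ) * ∑' n : ℕ, (-1)^n * (w^2)^n / ((n.factorial : ℂ)^2) := by
    calc ∫ θ in Set.Ioc (0:ℝ) (2*Real.pi), Complex.exp (c * Real.sin θ) ∂volume
        = ∫ θ in Set.Ioc (0:ℝ) (2*Real.pi), (∑' k, g k θ) ∂volume :=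
          integral_congr_ae (ae_of_all _ fun θ => (hpt θ).symm)
      _ = ∑' k, ∫ θ in Set.Ioc (0:ℝ) (2*Real.pi), g k θ ∂volume := hswap
      _ = ∑' m, ∫ θ in Set.Ioc (0:ℝ) (2*Real.pi), g (2*m) θ ∂volume := h2.symm
      _ = ∑' m : ℕ, ((2*Real.pi:ℝ):ℂ) * ((-1)^m * (w^2)^m / ((m.factorial:ℂ)^2)) :=
          tsum_congr heven
      _ = _ := tsum_mul_left
  -- bound the integral
  have hbound : ‖∫ θ in Set.Ioc (0:ℝ) (2*Real.pi), Complex.exp (c * Real.sin θ) ∂volume‖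
      ≤ Real.exp (2*|w.im|) * (2*Real.pi) := by
    rw [← intervalIntegral.integral_of_le two_pi_pos.le]
    have hb : ∀ θ ∈ Set.uIoc (0:ℝ) (2*Real.pi),
        ‖Complex.exp (c * Real.sin θ)‖ ≤ Real.exp (2*|w.im|) := by
      intro θ _
      rw [Complex.norm_exp]
      apply Real.exp_le_exp.2
      have hre : ∀ s : ℝ, (c * (s : ℂ)).re = -2 * w.im * s := by
        intro s
        rw [hc]
        simp [Complex.mul_re, Complex.mul_im]
      rw [hre (Real.sin θ)]
      calc -2 * w.im * Real.sin θ ≤ |(-2) * w.im * Real.sin θ| := le_abs_self _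
        _ = 2 * |w.im| * |Real.sin θ| := by
            rw [abs_mul, abs_mul]
            norm_num
        _ ≤ 2 * |w.im| * 1 := by
            gcongr
            exact Real.abs_sin_le_one θ
        _ = 2 * |w.im| := mul_one _
    calc ‖∫ θ in (0:ℝ)..(2*Real.pi), Complex.exp (c * Real.sin θ)‖
        ≤ Real.exp (2*|w.im|) * |2*Real.pi - 0| :=
          intervalIntegral.norm_integral_le_of_norm_le_const hb
      _ = Real.exp (2*|w.im|) * (2*Real.pi) := by rw [sub_zero, abs_of_pos two_pi_pos]
  -- conclude
  have hfin : (2*Real.pi) * ‖∑' n : ℕ, (-1)^n * (w^2)^n / ((n.factorial:ℂ)^2)‖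
      ≤ Real.exp (2*|w.im|) * (2*Real.pi) := by
    have hnorm2pi : ‖((2*Real.pi:ℝ):ℂ)‖ = 2*Real.pi := by
      rw [Complex.norm_real, Real.norm_eq_abs, abs_of_pos two_pi_pos]
    calc (2*Real.pi) * ‖∑' n : ℕ, (-1)^n * (w^2)^n / ((n.factorial:ℂ)^2)‖
        = ‖((2*Real.pi:ℝ):ℂ) * ∑' n : ℕ, (-1)^n * (w^2)^n / ((n.factorial:ℂ)^2)‖ := by
          rw [norm_mul, hnorm2pi]
      _ = ‖∫ θ in Set.Ioc (0:ℝ) (2*Real.pi), Complex.exp (c * Real.sin θ) ∂volume‖ := by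
          rw [key]
      _ ≤ _ := hbound
  rw [mul_comm (Real.exp _)] at hfin
  exact le_of_mul_le_mul_left hfin two_pi_pos

theorem J_bound (B : ℝ) (hB : 0 ≤ B) (σ : ℂ) :
    ‖∑' n : ℕ, (-1) ^ n * ((B : ℂ) * σ) ^ n / ((n.factorial : ℂ) ^ 2)‖ ≤
      Real.exp (2 * Real.sqrt B * |(σ ^ ((1:ℂ)/2)).im|) := by
  have key := J_sq_bound ((Real.sqrt B : ℂ) * σ ^ ((1:ℂ)/2))
  have hsq : ((Real.sqrt B : ℂ) * σ ^ ((1:ℂ)/2)) ^ 2 = (B : ℂ) * σ := by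
    rw [mul_pow]
    congr 1
    · rw [← Complex.ofReal_pow, Real.sq_sqrt hB]
    · have h := Complex.cpow_nat_inv_pow σ (two_ne_zero (α := ℕ))
      rw [show ((1:ℂ)/2) = (((2:ℕ) : ℂ))⁻¹ by norm_num]
      exact h
  rw [hsq] at key
  have him : ((Real.sqrt B : ℂ) * σ ^ ((1:ℂ)/2)).im
      = Real.sqrt B * (σ ^ ((1:ℂ)/2)).im := Complex.im_ofReal_mul _ _
  rw [him, abs_mul, abs_of_nonneg (Real.sqrt_nonneg B)] at key
  calc ‖∑' n : ℕ, (-1) ^ n * ((B : ℂ) * σ) ^ n / ((n.factorial : ℂ) ^ 2)‖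
      ≤ Real.exp (2 * (Real.sqrt B * |(σ ^ ((1:ℂ)/2)).im|)) := key
    _ = Real.exp (2 * Real.sqrt B * |(σ ^ ((1:ℂ)/2)).im|) := by ring_nf
end

section
/- Let γ ∈ (0,1), K > 0, and let â : [0,∞) → ℂ be continuous with |â(τ)| ≤ C e^{K'τ} for some C > 0, K' > K. Define b̂(τ) := (sin(πγ)/π) ∫_0^1 â(τu) u^{γ−1}(1−u)^{−γ} du. Then for every complex h with Re(1/h) > K', one has (1/Γ(γ)) ∫_0^∞ â(τ) e^{−τ/h} (τ/h)^{γ−1} dτ/h = ∫_0^∞ b̂(τ) e^{−τ/h} dτ/h. -/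
open MeasureTheory Set Complex Filter
open scoped Topology

lemma aux_meas_rpow (c : ℝ) : Measurable (fun t : ℝ => t ^ c) := by measurability


/-- `(r z)^s = r^s z^s` for positive real `r`. -/
lemma aux_ofReal_mul_cpow {r : ℝ} (hr : 0 < r) {z : ℂ} (hz : z ≠ 0) (s : ℂ) :
    ((r : ℂ) * z) ^ s = (r : ℂ) ^ s * z ^ s := by
  have hr' : (r : ℂ) ≠ 0 := Complex.ofReal_ne_zero.mpr hr.ne'
  rw [Complex.cpow_def_of_ne_zero (mul_ne_zero hr' hz),
    Complex.cpow_def_of_ne_zero hr', Complex.cpow_def_of_ne_zero hz,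
    Complex.log_ofReal_mul hr hz, add_mul, Complex.exp_add, Complex.ofReal_log hr.le]

/-- Integrability of `t^(σ-1) e^(-ε t)` on `(0,∞)`. -/
lemma aux_integrableOn_rpow_exp {σ ε : ℝ} (hσ : 0 < σ) (hε : 0 < ε) :
    IntegrableOn (fun t : ℝ => t ^ (σ - 1) * Real.exp (-(ε * t))) (Ioi (0:ℝ)) := by
  have h0 := Real.GammaIntegral_convergent hσ
  have h1 : IntegrableOn (fun x : ℝ => Real.exp (-(ε * x)) * (ε * x) ^ (σ - 1)) (Ioi 0) := by
    rw [integrableOn_Ioi_comp_mul_left_iff (fun x : ℝ => Real.exp (-x) * x ^ (σ - 1)) 0 hε,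
      mul_zero]
    exact h0
  refine IntegrableOn.congr_fun (h1.const_mul (ε ^ (1 - σ))) (fun t ht => ?_) measurableSet_Ioi
  have ht0 : (0:ℝ) < t := ht
  rw [Real.mul_rpow hε.le ht0.le]
  rw [show ε ^ (1 - σ) * (Real.exp (-(ε * t)) * (ε ^ (σ - 1) * t ^ (σ - 1)))
      = (ε ^ (1 - σ) * ε ^ (σ - 1)) * (t ^ (σ - 1) * Real.exp (-(ε * t))) by ring,
    ← Real.rpow_add hε]
  norm_num

lemma aux_meas_cpow_exp (σ : ℝ) (p : ℂ) :
    AEStronglyMeasurable (fun t : ℝ => ((t ^ (σ - 1) : ℝ) : ℂ) * Complex.exp (-(p * t)))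
      (volume.restrict (Ioi (0:ℝ))) := by
  apply Measurable.aestronglyMeasurable
  have h1 : Measurable (fun t : ℝ => t ^ (σ - 1)) := aux_meas_rpow _
  exact (Complex.measurable_ofReal.comp h1).mul
    (Complex.continuous_exp.comp ((continuous_const.mul Complex.continuous_ofReal).neg)).measurable

lemma aux_norm_cpow_exp (σ : ℝ) (p : ℂ) {t : ℝ} (ht : 0 < t) :
    ‖((t ^ (σ - 1) : ℝ) : ℂ) * Complex.exp (-(p * t))‖
      = t ^ (σ - 1) * Real.exp (-(p.re * t)) := by
  rw [norm_mul, Complex.norm_real, Real.norm_eq_abs,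
    _root_.abs_of_nonneg (Real.rpow_nonneg ht.le _), Complex.norm_exp]
  congr 2
  simp [Complex.mul_re]

lemma aux_int_cpow_exp {σ : ℝ} (hσ : 0 < σ) {p : ℂ} (hp : 0 < p.re) :
    IntegrableOn (fun t : ℝ => ((t ^ (σ - 1) : ℝ) : ℂ) * Complex.exp (-(p * t))) (Ioi (0:ℝ)) := by
  refine Integrable.mono' (aux_integrableOn_rpow_exp hσ hp) (aux_meas_cpow_exp σ p) ?_
  refine (ae_restrict_iff' measurableSet_Ioi).mpr (.of_forall fun t ht => ?_)
  rw [aux_norm_cpow_exp σ p ht]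

lemma aux_gamma_laplace {σ : ℝ} (hσ : 0 < σ) {p : ℂ} (hp : 0 < p.re) :
    ∫ t in Ioi (0:ℝ), ((t ^ (σ - 1) : ℝ) : ℂ) * Complex.exp (-(p * t))
      = Complex.Gamma σ * p ^ (-(σ:ℂ)) := by
  set U : Set ℂ := {z : ℂ | 0 < z.re} with hUdef
  have hUo : IsOpen U := isOpen_lt continuous_const Complex.continuous_re
  have hUc : IsPreconnected U := (convex_halfSpace_re_gt 0).isPreconnected
  set F : ℂ → ℂ := fun z => ∫ t in Ioi (0:ℝ), ((t ^ (σ - 1) : ℝ) : ℂ) * Complex.exp (-(z * t))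
    with hFdef
  set G : ℂ → ℂ := fun z => Complex.Gamma σ * z ^ (-(σ:ℂ)) with hGdef
  -- F is differentiable on U
  have hFdiff : DifferentiableOn ℂ F U := by
    intro z hz
    have hz' : 0 < z.re := hz
    set ε : ℝ := z.re / 2 with hε
    have hε0 : 0 < ε := by positivity
    have key := hasDerivAt_integral_of_dominated_loc_of_deriv_le (μ := volume.restrict (Ioi 0))
      (x₀ := z)
      (F := fun (x : ℂ) (t : ℝ) => ((t ^ (σ - 1) : ℝ) : ℂ) * Complex.exp (-(x * t)))
      (F' := fun (x : ℂ) (t : ℝ) => ((t ^ (σ - 1) : ℝ) : ℂ) * (-(t:ℂ) * Complex.exp (-(x * t))))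
      (bound := fun t : ℝ => t ^ (σ - 1) * (t * Real.exp (-(ε * t)))) (Metric.ball_mem_nhds z hε0)
      (.of_forall fun x => aux_meas_cpow_exp σ x)
      (aux_int_cpow_exp hσ hz')
      ?_ ?_ ?_ ?_
    · exact (key.2.differentiableAt).differentiableWithinAt
    · -- AESM of F' z
      apply Measurable.aestronglyMeasurable
      have h1 : Measurable (fun t : ℝ => t ^ (σ - 1)) := by measurability
      exact (Complex.measurable_ofReal.comp h1).mul
        ((Complex.measurable_ofReal.neg).mul
          (Complex.continuous_exp.comp
            ((continuous_const.mul Complex.continuous_ofReal).neg)).measurable)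
    · -- bound
      refine (ae_restrict_iff' measurableSet_Ioi).mpr (.of_forall fun t ht => fun x hx => ?_)
      have ht0 : (0:ℝ) < t := ht
      have hxre : ε ≤ x.re := by
        have h1 : ‖x - z‖ < ε := by simpa [Metric.mem_ball, dist_eq_norm] using hx
        have h2 : |(x - z).re| ≤ ‖x - z‖ := Complex.abs_re_le_norm _
        have h3 : (x - z).re = x.re - z.re := by simp [Complex.sub_re]
        have := neg_le_of_abs_le h2
        simp only [h3] at this
        have : z.re - ‖x - z‖ ≤ x.re := by linarith
        have : z.re - ε ≤ x.re := by nlinarith [h1]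
        simpa [hε] using by linarith [this]
      rw [norm_mul, norm_mul, Complex.norm_real, Real.norm_eq_abs,
        _root_.abs_of_nonneg (Real.rpow_nonneg ht0.le _), norm_neg, Complex.norm_real,
        Real.norm_eq_abs, _root_.abs_of_nonneg ht0.le, Complex.norm_exp]
      have hre : (-(x * (t:ℂ))).re = -(x.re * t) := by simp [Complex.mul_re]
      rw [hre]
      have : Real.exp (-(x.re * t)) ≤ Real.exp (-(ε * t)) := by
        apply Real.exp_le_exp.mpr
        nlinarith
      have hrp : (0:ℝ) ≤ t ^ (σ - 1) := Real.rpow_nonneg ht0.le _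
      exact mul_le_mul_of_nonneg_left (mul_le_mul_of_nonneg_left this ht0.le) hrp
    · -- bound integrable
      refine IntegrableOn.congr_fun (aux_integrableOn_rpow_exp (by linarith : (0:ℝ) < σ + 1) hε0)
        (fun t ht => ?_) measurableSet_Ioi
      have ht0 : (0:ℝ) < t := ht
      rw [show σ + 1 - 1 = (σ - 1) + 1 by ring, Real.rpow_add_one ht0.ne']
      ring
    · -- differentiability in the parameter
      refine .of_forall fun t => fun x _ => ?_
      have h1 : HasDerivAt (fun x : ℂ => -(x * (t:ℂ))) (-(t:ℂ)) x := by
        have := ((hasDerivAt_id' x).mul_const (t:ℂ)).neg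
        rw [one_mul] at this
        exact this
      have h2 := h1.cexp
      have h3 := h2.const_mul (((t ^ (σ - 1) : ℝ)) : ℂ)
      rw [mul_comm (Complex.exp _) (-(t:ℂ))] at h3
      exact h3
  have hGdiff : DifferentiableOn ℂ G U := by
    intro z hz
    have hz' : 0 < z.re := hz
    have hslit : z ∈ Complex.slitPlane := Complex.mem_slitPlane_iff.mpr (Or.inl hz')
    exact (((Complex.hasStrictDerivAt_cpow_const hslit).hasDerivAt).differentiableAt.const_mul
      _).differentiableWithinAt
  have hFan : AnalyticOnNhd ℂ F U := hFdiff.analyticOnNhd hUo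
  have hGan : AnalyticOnNhd ℂ G U := hGdiff.analyticOnNhd hUo
  -- agreement for positive real arguments
  have hreal : ∀ r : ℝ, 0 < r → F r = G r := by
    intro r hr
    have h0 := integral_cpow_mul_exp_neg_mul_Ioi (a := (σ:ℂ)) (by simpa using hσ) hr
    have hcongr : F r = ∫ t in Ioi (0:ℝ), (t:ℂ) ^ ((σ:ℂ) - 1) * Complex.exp (-((r:ℂ) * t)) := by
      refine setIntegral_congr_fun measurableSet_Ioi (fun t ht => ?_)
      have ht0 : (0:ℝ) < t := ht
      rw [Complex.ofReal_cpow ht0.le]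
      norm_num
    rw [hcongr, h0, hGdef]
    have harg : (r:ℂ).arg ≠ Real.pi := by
      rw [Complex.arg_ofReal_of_nonneg hr.le]
      exact Real.pi_ne_zero.symm
    rw [one_div, inv_cpow _ _ harg, ← cpow_neg, mul_comm]
  -- frequently equal near 1
  have h1U : (1:ℂ) ∈ U := by simp [hUdef]
  have hfreq : ∃ᶠ z in nhdsWithin (1:ℂ) {(1:ℂ)}ᶜ, F z = G z := by
    have htends : Tendsto (fun n : ℕ => ((1 + (1:ℝ)/(n+1) : ℝ) : ℂ)) atTop (𝓝[≠] (1:ℂ)) := by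
      apply tendsto_nhdsWithin_of_tendsto_nhds_of_eventually_within
      · have h1 : Tendsto (fun n : ℕ => (1 + (1:ℝ)/(n+1) : ℝ)) atTop (𝓝 1) := by
          simpa using (tendsto_const_nhds (x := (1:ℝ))).add tendsto_one_div_add_atTop_nhds_zero_nat
        have h2 := (Complex.continuous_ofReal.tendsto 1).comp h1
        simpa [Function.comp_def] using h2
      · filter_upwards with n
        simp only [mem_compl_iff, mem_singleton_iff]
        intro hcon
        have : (1 + (1:ℝ)/(n+1)) = 1 := by exact_mod_cast hcon
        have hp1 : (0:ℝ) < 1/(n+1) := by positivity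
        linarith
    exact htends.frequently (Eventually.of_forall (fun n =>
      hreal _ (by positivity)) |>.frequently)
  have := hFan.eqOn_of_preconnected_of_frequently_eq hGan hUc h1U hfreq
  exact this hp

lemma aux_subst {γ : ℝ} (hγ0 : 0 < γ) (hγ1 : γ < 1) (a : ℝ → ℂ) {τ : ℝ} (hτ : 0 < τ) :
    ∫ u in (0:ℝ)..1, a (τ * u) * ((u ^ (γ - 1) : ℝ) : ℂ) * (((1 - u) ^ (-γ) : ℝ) : ℂ)
      = ∫ x in (0:ℝ)..τ, a x * ((x ^ (γ - 1) : ℝ) : ℂ) * (((τ - x) ^ (-γ) : ℝ) : ℂ) := by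
  have hτ' : τ ≠ 0 := hτ.ne'
  have hτc : (τ:ℂ) ≠ 0 := Complex.ofReal_ne_zero.mpr hτ'
  have h0 := intervalIntegral.integral_comp_div (a := 0) (b := τ) (c := τ)
    (f := fun u : ℝ => a (τ * u) * ((u ^ (γ - 1) : ℝ) : ℂ) * (((1 - u) ^ (-γ) : ℝ) : ℂ)) hτ'
  rw [zero_div, div_self hτ'] at h0
  have heq : EqOn
      (fun x : ℝ => a (τ * (x / τ)) * (((x/τ) ^ (γ - 1) : ℝ) : ℂ) * (((1 - x/τ) ^ (-γ) : ℝ) : ℂ))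
      (fun x : ℝ => a x * ((x ^ (γ - 1) : ℝ) : ℂ) * (((τ - x) ^ (-γ) : ℝ) : ℂ) * (τ:ℂ))
      (uIcc 0 τ) := by
    intro x hx
    rw [uIcc_of_le hτ.le] at hx
    obtain ⟨hx1, hx2⟩ := hx
    have e1 : τ * (x/τ) = x := by field_simp
    have e2 : 1 - x/τ = (τ - x)/τ := by field_simp
    have e3 : (x/τ) ^ (γ-1) = x ^ (γ-1) * τ ^ (1-γ) := by
      rw [Real.div_rpow hx1 hτ.le, div_eq_mul_inv, ← Real.rpow_neg hτ.le, neg_sub]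
    have e4 : ((τ - x)/τ) ^ (-γ) = (τ-x) ^ (-γ) * τ ^ γ := by
      rw [Real.div_rpow (sub_nonneg.2 hx2) hτ.le, div_eq_mul_inv, ← Real.rpow_neg hτ.le, neg_neg]
    have e5 : ((τ ^ (1-γ) : ℝ) : ℂ) * ((τ ^ γ : ℝ) : ℂ) = (τ:ℂ) := by
      rw [← Complex.ofReal_mul, ← Real.rpow_add hτ]
      norm_num
    simp only [e1, e2, e3, e4]
    push_cast
    linear_combination (a x * ((x ^ (γ-1) : ℝ) : ℂ) * (((τ-x) ^ (-γ) : ℝ) : ℂ)) * e5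
  rw [intervalIntegral.integral_congr heq, intervalIntegral.integral_mul_const] at h0
  have h1 : (τ:ℂ) * ∫ u in (0:ℝ)..1,
      a (τ * u) * ((u ^ (γ - 1) : ℝ) : ℂ) * (((1 - u) ^ (-γ) : ℝ) : ℂ)
      = (τ:ℂ) * ∫ x in (0:ℝ)..τ, a x * ((x ^ (γ - 1) : ℝ) : ℂ) * (((τ - x) ^ (-γ) : ℝ) : ℂ) := by
    rw [← Complex.real_smul, ← h0]
    ring
  exact mul_left_cancel₀ hτc h1

theorem hv_gamma_to_one_laplace (γ : ℝ) (hγ : γ ∈ Set.Ioo (0:ℝ) 1) (K : ℝ) (hK : 0 < K)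
    (a : ℝ → ℂ) (ha : Continuous a)
    (C K' : ℝ) (hC : 0 < C) (hK' : K < K')
    (hgrowth : ∀ τ : ℝ, 0 ≤ τ → ‖a τ‖ ≤ C * Real.exp (K' * τ))
    (b : ℝ → ℂ)
    (hb : ∀ τ : ℝ, b τ = ((Real.sin (Real.pi * γ) / Real.pi : ℝ) : ℂ) *
        ∫ u in (0:ℝ)..1, a (τ * u) * ((u ^ (γ - 1) : ℝ) : ℂ) * (((1 - u) ^ (-γ) : ℝ) : ℂ))
    (h : ℂ) (hh : K' < (1 / h).re) :
    (1 / Complex.Gamma γ) *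
        ∫ τ in Set.Ioi (0:ℝ), a τ * Complex.exp (-(τ : ℂ) / h) *
          ((τ : ℂ) / h) ^ ((γ : ℂ) - 1) / h =
      ∫ τ in Set.Ioi (0:ℝ), b τ * Complex.exp (-(τ : ℂ) / h) / h := by
  obtain ⟨hγ0, hγ1⟩ := hγ
  set p : ℂ := 1 / h with hpdef
  have hKp : K' < p.re := hh
  have hpre : 0 < p.re := by linarith
  have hp0 : p ≠ 0 := by
    intro h0
    rw [h0] at hpre
    simp at hpre
  have hdiv : ∀ X : ℂ, X / h = X * p := by
    intro X
    rw [hpdef, div_eq_mul_inv, one_div]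
  set c₀ : ℂ := ((Real.sin (Real.pi * γ) / Real.pi : ℝ) : ℂ) with hc₀
  set f : ℝ → ℂ := fun s => a s * ((s ^ (γ - 1) : ℝ) : ℂ) * Complex.exp (-(p * s)) with hfdef
  set g : ℝ → ℂ := fun t => ((t ^ (-γ) : ℝ) : ℂ) * Complex.exp (-(p * t)) with hgdef
  -- integrability of f
  have hfint : IntegrableOn f (Ioi (0:ℝ)) := by
    refine Integrable.mono'
      ((aux_integrableOn_rpow_exp hγ0 (show (0:ℝ) < p.re - K' by linarith)).const_mul C) ?_ ?_
    · have h1 : Measurable (fun t : ℝ => t ^ (γ - 1)) := aux_meas_rpow _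
      exact ((ha.measurable.mul (Complex.measurable_ofReal.comp h1)).mul
        (Complex.continuous_exp.comp
          ((continuous_const.mul Complex.continuous_ofReal).neg)).measurable).aestronglyMeasurable
    · refine (ae_restrict_iff' measurableSet_Ioi).mpr (.of_forall fun s hs => ?_)
      have hs0 : (0:ℝ) < s := hs
      have e1 : ‖f s‖ = ‖a s‖ * (s ^ (γ - 1) * Real.exp (-(p.re * s))) := by
        rw [hfdef]
        simp only [mul_assoc]
        rw [norm_mul, aux_norm_cpow_exp γ p hs0]
      rw [e1]
      have e2 : ‖a s‖ * (s ^ (γ - 1) * Real.exp (-(p.re * s)))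
          ≤ (C * Real.exp (K' * s)) * (s ^ (γ - 1) * Real.exp (-(p.re * s))) := by
        apply mul_le_mul_of_nonneg_right (hgrowth s hs0.le)
        positivity
      refine e2.trans (le_of_eq ?_)
      have e3 : Real.exp (K' * s) * Real.exp (-(p.re * s)) = Real.exp (-((p.re - K') * s)) := by
        rw [← Real.exp_add]
        ring_nf
      rw [← e3]
      ring
  -- integrability of g
  have hgint : IntegrableOn g (Ioi (0:ℝ)) := by
    refine (aux_int_cpow_exp (σ := 1 - γ) (by linarith) hpre).congr_fun
      (fun t ht => ?_) measurableSet_Ioi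
    rw [hgdef]
    norm_num
  -- value of ∫ g
  have hgval : ∫ t in Ioi (0:ℝ), g t = Complex.Gamma (1 - (γ:ℂ)) * p ^ ((γ:ℂ) - 1) := by
    have h1 := aux_gamma_laplace (σ := 1 - γ) (by linarith : (0:ℝ) < 1 - γ) hpre
    rw [show ((1:ℝ) - γ - 1) = -γ by ring] at h1
    have h2 : Complex.Gamma ((1 - γ : ℝ):ℂ) * p ^ (-((1 - γ:ℝ):ℂ))
        = Complex.Gamma (1 - (γ:ℂ)) * p ^ ((γ:ℂ) - 1) := by
      have e1 : ((1 - γ : ℝ):ℂ) = 1 - (γ:ℂ) := by push_cast; ring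
      rw [e1]
      congr 1
      congr 1
      ring
    exact h1.trans h2
  -- LHS
  have hLHS : (∫ τ in Ioi (0:ℝ), a τ * Complex.exp (-(τ:ℂ)/h) * ((τ:ℂ)/h) ^ ((γ:ℂ)-1) / h)
      = (∫ t in Ioi (0:ℝ), f t) * (p ^ ((γ:ℂ)-1) * p) := by
    rw [← integral_mul_const]
    refine setIntegral_congr_fun measurableSet_Ioi (fun τ hτ => ?_)
    have hτ0 : (0:ℝ) < τ := hτ
    have e1 : -(τ:ℂ)/h = -(p * τ) := by
      rw [neg_div, hdiv]
      ring
    have e2 : ((τ:ℂ)/h) ^ ((γ:ℂ)-1) = ((τ ^ (γ-1) : ℝ) : ℂ) * p ^ ((γ:ℂ)-1) := by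
      rw [hdiv, aux_ofReal_mul_cpow hτ0 hp0, Complex.ofReal_cpow hτ0.le]
      push_cast
      ring
    rw [e1, e2, hdiv, hfdef]
    ring
  -- RHS pointwise rewriting
  have hRHS_step : ∀ τ ∈ Ioi (0:ℝ), b τ * Complex.exp (-(τ:ℂ)/h) / h
      = c₀ * p * ∫ t in (0:ℝ)..τ, (ContinuousLinearMap.mul ℝ ℂ) (f t) (g (τ - t)) := by
    intro τ hτ
    have hτ0 : (0:ℝ) < τ := hτ
    have e1 : -(τ:ℂ)/h = -(p * τ) := by
      rw [neg_div, hdiv]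
      ring
    have key : ∀ x : ℝ, (ContinuousLinearMap.mul ℝ ℂ) (f x) (g (τ - x))
        = a x * ((x ^ (γ-1) : ℝ) : ℂ) * (((τ - x) ^ (-γ) : ℝ) : ℂ) * Complex.exp (-(p * τ)) := by
      intro x
      have e3 : Complex.exp (-(p * x)) * Complex.exp (-(p * ((τ:ℂ) - x)))
          = Complex.exp (-(p * τ)) := by
        rw [← Complex.exp_add]
        congr 1
        ring
      simp only [ContinuousLinearMap.mul_apply', hfdef, hgdef]
      push_cast
      linear_combination (a x * ((x ^ (γ-1) : ℝ) : ℂ) * (((τ - x) ^ (-γ) : ℝ) : ℂ)) * e3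
    rw [hb τ, aux_subst hγ0 hγ1 a hτ0, e1, hdiv,
      intervalIntegral.integral_congr (g := fun x : ℝ => a x * ((x ^ (γ-1) : ℝ) : ℂ) *
        (((τ - x) ^ (-γ) : ℝ) : ℂ) * Complex.exp (-(p * τ))) (fun x _ => key x),
      intervalIntegral.integral_mul_const]
    ring
  -- RHS value
  have hRHS : (∫ τ in Ioi (0:ℝ), b τ * Complex.exp (-(τ:ℂ)/h) / h)
      = c₀ * p * ((∫ t in Ioi (0:ℝ), f t) * (∫ t in Ioi (0:ℝ), g t)) := by
    rw [setIntegral_congr_fun measurableSet_Ioi hRHS_step, integral_const_mul,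
      integral_posConvolution hfint hgint (ContinuousLinearMap.mul ℝ ℂ)]
    simp [ContinuousLinearMap.mul_apply']
  rw [hLHS, hRHS, hgval]
  -- final algebra using the reflection formula
  have hΓγ : Complex.Gamma (γ:ℂ) ≠ 0 := by
    rw [Complex.Gamma_ofReal]
    exact_mod_cast (Real.Gamma_pos_of_pos hγ0).ne'
  have hsinR : Real.sin (Real.pi * γ) ≠ 0 :=
    (Real.sin_pos_of_pos_of_lt_pi (by positivity) (by nlinarith [Real.pi_pos])).ne'
  have hsin : Complex.sin ((Real.pi:ℂ) * (γ:ℂ)) ≠ 0 := by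
    rw [show (Real.pi:ℂ) * (γ:ℂ) = ((Real.pi * γ : ℝ):ℂ) by push_cast; ring, ← Complex.ofReal_sin]
    exact_mod_cast hsinR
  have hπ : ((Real.pi : ℝ):ℂ) ≠ 0 := by exact_mod_cast Real.pi_ne_zero
  have hrefl := Complex.Gamma_mul_Gamma_one_sub (γ:ℂ)
  have hc : c₀ = Complex.sin ((Real.pi:ℂ) * (γ:ℂ)) / (Real.pi:ℂ) := by
    rw [hc₀]
    push_cast [Complex.ofReal_sin]
    ring
  have hkey : c₀ * Complex.Gamma (1 - (γ:ℂ)) = 1 / Complex.Gamma (γ:ℂ) := by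
    have hrefl' : Complex.Gamma (γ:ℂ) * Complex.Gamma (1 - (γ:ℂ))
        = (Real.pi:ℂ) / Complex.sin ((Real.pi:ℂ) * (γ:ℂ)) := by
      rw [hrefl]
    rw [hc, eq_div_iff hΓγ]
    calc Complex.sin ((Real.pi:ℂ) * (γ:ℂ)) / (Real.pi:ℂ) * Complex.Gamma (1 - (γ:ℂ))
          * Complex.Gamma (γ:ℂ)
        = Complex.sin ((Real.pi:ℂ) * (γ:ℂ)) * (Complex.Gamma (γ:ℂ) * Complex.Gamma (1 - (γ:ℂ)))
          / (Real.pi:ℂ) := by ring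
      _ = 1 := by rw [hrefl']; field_simp
  rw [← hkey]
  ring
end

section
/- Let K_2 > 0 and let â : [0,∞) → ℂ be continuously differentiable with max(|â(0)|, sup_{σ≥0} |â'(σ)|) ≤ K_2. Define b̂(σ) := e^{â(0)} (1 + ∑_{n≥1} (1/n!) Â_n(σ)) where Â_n(σ) = σ^n ∫_{u_1+⋯+u_n ≤ 1} â'(u_1σ)⋯â'(u_nσ) du. Then the series converges for every σ ≥ 0 and |b̂(σ)| ≤ e^{K_2} exp(2 K_2^{1/2} σ^{1/2}). -/
open MeasureTheory

/-- `Ahat a n σ = σ^n ∫_{u_1+⋯+u_n ≤ 1, u_i ≥ 0} a(u_1 σ)⋯a(u_n σ) du`. -/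
noncomputable def Ahat (a : ℝ → ℂ) (n : ℕ) (σ : ℝ) : ℂ :=
  (σ : ℂ) ^ n *
    ∫ u in {u : Fin n → ℝ | (∀ i, 0 ≤ u i) ∧ ∑ i, u i ≤ 1}, ∏ i, a (u i * σ)


lemma measSimplex (n : ℕ) (c : ℝ) :
    MeasurableSet {u : Fin n → ℝ | (∀ i, 0 ≤ u i) ∧ ∑ i, u i ≤ c} := by
  have h : {u : Fin n → ℝ | (∀ i, 0 ≤ u i) ∧ ∑ i, u i ≤ c}
      = (⋂ i, {u : Fin n → ℝ | 0 ≤ u i}) ∩ {u : Fin n → ℝ | ∑ i, u i ≤ c} := by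
    ext u; simp [Set.mem_iInter]
  rw [h]
  exact (MeasurableSet.iInter fun i =>
      measurableSet_le measurable_const (measurable_pi_apply i)).inter
    (measurableSet_le (Finset.measurable_sum _ fun i _ => measurable_pi_apply i)
      measurable_const)

lemma vol_simplex (n : ℕ) : ∀ c : ℝ, 0 ≤ c →
    volume {u : Fin n → ℝ | (∀ i, 0 ≤ u i) ∧ ∑ i, u i ≤ c}
      ≤ ENNReal.ofReal (c ^ n / n.factorial) := by
  induction n with
  | zero =>
    intro c hc
    have : {u : Fin 0 → ℝ | (∀ i, 0 ≤ u i) ∧ ∑ i, u i ≤ c} = Set.univ := by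
      ext u; simp [hc]
    have h1 : (volume : Measure (Fin 0 → ℝ)) Set.univ = 1 := by
      simp [volume_pi, Measure.pi_univ]
    rw [this, h1]; norm_num
  | succ n ih =>
    intro c hc
    set e := MeasurableEquiv.piFinSuccAbove (fun _ : Fin (n+1) => ℝ) 0
    have hmp := measurePreserving_piFinSuccAbove (fun _ : Fin (n+1) => (volume : Measure ℝ)) 0
    set T : Set (ℝ × (Fin n → ℝ)) :=
      {p | 0 ≤ p.1 ∧ (∀ i, 0 ≤ p.2 i) ∧ p.1 + ∑ i, p.2 i ≤ c} with hT
    have hTm : MeasurableSet T := by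
      have h : T = {p : ℝ × (Fin n → ℝ) | 0 ≤ p.1} ∩
          ((⋂ i, {p : ℝ × (Fin n → ℝ) | 0 ≤ p.2 i}) ∩
            {p : ℝ × (Fin n → ℝ) | p.1 + ∑ i, p.2 i ≤ c}) := by
        ext p; simp [hT, Set.mem_iInter, and_assoc]
      rw [h]
      exact (measurableSet_le measurable_const measurable_fst).inter
        ((MeasurableSet.iInter fun i => measurableSet_le measurable_const
            ((measurable_pi_apply i).comp measurable_snd)).inter
          (measurableSet_le (measurable_fst.add <|
            Finset.measurable_sum _ fun i _ => (measurable_pi_apply i).comp measurable_snd)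
            measurable_const))
    have hpre : e ⁻¹' T = {u : Fin (n+1) → ℝ | (∀ i, 0 ≤ u i) ∧ ∑ i, u i ≤ c} := by
      ext u
      simp only [Set.mem_preimage, Set.mem_setOf_eq, hT, e,
        MeasurableEquiv.piFinSuccAbove_apply, Fin.succAbove_zero]
      rw [Fin.sum_univ_succ, Fin.forall_fin_succ]
      tauto
    have key : volume {u : Fin (n+1) → ℝ | (∀ i, 0 ≤ u i) ∧ ∑ i, u i ≤ c}
        = ((volume : Measure ℝ).prod (volume : Measure (Fin n → ℝ))) T := by
      rw [← hpre]
      exact (hmp.measure_preimage hTm.nullMeasurableSet)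
    rw [key, Measure.prod_apply hTm]
    have hslice : ∀ x : ℝ, volume (Prod.mk x ⁻¹' T)
        ≤ Set.indicator (Set.Icc 0 c)
            (fun x => ENNReal.ofReal ((c - x) ^ n / n.factorial)) x := by
      intro x
      by_cases hx : x ∈ Set.Icc 0 c
      · rw [Set.indicator_of_mem hx]
        have hset : Prod.mk x ⁻¹' T
            ⊆ {v : Fin n → ℝ | (∀ i, 0 ≤ v i) ∧ ∑ i, v i ≤ c - x} := by
          intro v hv
          obtain ⟨h1, h2, h3⟩ := hv
          exact ⟨h2, by linarith⟩
        calc volume (Prod.mk x ⁻¹' T) ≤ _ := measure_mono hset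
          _ ≤ _ := ih (c - x) (by linarith [hx.2])
      · rw [Set.indicator_of_notMem hx]
        have hset : Prod.mk x ⁻¹' T = ∅ := by
          ext v
          simp only [Set.mem_preimage, hT, Set.mem_setOf_eq, Set.mem_empty_iff_false,
            iff_false, not_and]
          intro h1 h2 h3
          have hsum : (0:ℝ) ≤ ∑ i, v i := Finset.sum_nonneg fun i _ => h2 i
          exact hx ⟨h1, by linarith⟩
        simp [hset]
    calc ∫⁻ x, volume (Prod.mk x ⁻¹' T)
        ≤ ∫⁻ x, Set.indicator (Set.Icc 0 c)
            (fun x => ENNReal.ofReal ((c - x) ^ n / n.factorial)) x :=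
          lintegral_mono hslice
      _ = ∫⁻ x in Set.Icc 0 c, ENNReal.ofReal ((c - x) ^ n / n.factorial) := by
          rw [lintegral_indicator measurableSet_Icc]
      _ = ENNReal.ofReal (∫ x in Set.Icc 0 c, (c - x) ^ n / n.factorial) := by
          rw [← ofReal_integral_eq_lintegral_ofReal]
          · exact (Continuous.integrableOn_Icc (by continuity))
          · filter_upwards [ae_restrict_mem measurableSet_Icc] with x hx
            have : 0 ≤ c - x := by linarith [hx.2]
            positivity
      _ = ENNReal.ofReal (c ^ (n+1) / (n+1).factorial) := by
          congr 1
          rw [MeasureTheory.integral_Icc_eq_integral_Ioc,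
            ← intervalIntegral.integral_of_le hc]
          have h1 : ∫ x in (0:ℝ)..c, (c - x) ^ n / n.factorial
              = (∫ x in (0:ℝ)..c, (c - x) ^ n) / n.factorial :=
            intervalIntegral.integral_div _ _
          have h2 : ∫ x in (0:ℝ)..c, (c - x) ^ n = ∫ x in (c - c)..(c - 0), x ^ n :=
            intervalIntegral.integral_comp_sub_left (fun x => x ^ n) c
          rw [h1, h2]
          simp only [sub_self, sub_zero, integral_pow]
          rw [Nat.factorial_succ]
          have hnf : (n.factorial : ℝ) ≠ 0 := Nat.cast_ne_zero.2 n.factorial_ne_zero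
          field_simp
          push_cast; ring

lemma Ahat_norm_le (g : ℝ → ℂ) (K σ : ℝ) (hK : 0 ≤ K) (hσ : 0 ≤ σ)
    (hg : ∀ t : ℝ, 0 ≤ t → ‖g t‖ ≤ K) (n : ℕ) :
    ‖Ahat g n σ‖ ≤ (K * σ) ^ n / n.factorial := by
  set S := {u : Fin n → ℝ | (∀ i, 0 ≤ u i) ∧ ∑ i, u i ≤ 1} with hS
  have hSsub : S ⊆ Set.univ.pi fun _ : Fin n => Set.Icc (0:ℝ) 1 := by
    intro u hu i _
    refine ⟨hu.1 i, ?_⟩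
    calc u i = ∑ j ∈ {i}, u j := by simp
      _ ≤ ∑ j, u j := Finset.sum_le_sum_of_subset_of_nonneg (Finset.subset_univ _)
          (fun j _ _ => hu.1 j)
      _ ≤ 1 := hu.2
  have hSfin : volume S < ⊤ := by
    refine lt_of_le_of_lt (measure_mono hSsub) ?_
    rw [volume_pi_pi]
    simp [Real.volume_Icc]
  have hbound : ∀ u ∈ S, ‖∏ i, g (u i * σ)‖ ≤ K ^ n := by
    intro u hu
    rw [norm_prod]
    calc ∏ i, ‖g (u i * σ)‖ ≤ ∏ _i : Fin n, K :=
        Finset.prod_le_prod (fun i _ => norm_nonneg _)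
          (fun i _ => hg _ (mul_nonneg (hu.1 i) hσ))
      _ = K ^ n := by simp
  have hint : ‖∫ u in S, ∏ i, g (u i * σ)‖ ≤ K ^ n * (volume S).toReal :=
    norm_setIntegral_le_of_norm_le_const hSfin hbound
  have htr : (volume S).toReal ≤ 1 / n.factorial := by
    refine ENNReal.toReal_le_of_le_ofReal (by positivity) ?_
    have := vol_simplex n 1 zero_le_one
    simpa using this
  have hnorm : ‖Ahat g n σ‖ = σ ^ n * ‖∫ u in S, ∏ i, g (u i * σ)‖ := by
    rw [Ahat, norm_mul, norm_pow, Complex.norm_real, Real.norm_of_nonneg hσ]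
  rw [hnorm]
  calc σ ^ n * ‖∫ u in S, ∏ i, g (u i * σ)‖
      ≤ σ ^ n * (K ^ n * (volume S).toReal) := by
        exact mul_le_mul_of_nonneg_left hint (by positivity)
    _ ≤ σ ^ n * (K ^ n * (1 / n.factorial)) := by gcongr
    _ = (K * σ) ^ n / n.factorial := by rw [mul_pow]; ring

lemma two_mul_factorial_le (n : ℕ) :
    (2 * n).factorial ≤ 4 ^ n * (n.factorial * n.factorial) := by
  have h1 : (2 * n).choose n * n.factorial * (2 * n - n).factorial = (2 * n).factorial :=
    Nat.choose_mul_factorial_mul_factorial (by omega)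
  have h2 : 2 * n - n = n := by omega
  rw [h2] at h1
  have h3 : (2 * n).choose n ≤ 4 ^ n :=
    le_trans (Nat.choose_le_choose n (by omega)) (Nat.choose_middle_le_pow n)
  calc (2 * n).factorial = (2 * n).choose n * n.factorial * n.factorial := h1.symm
    _ ≤ 4 ^ n * n.factorial * n.factorial := by
        exact Nat.mul_le_mul_right _ (Nat.mul_le_mul_right _ h3)
    _ = 4 ^ n * (n.factorial * n.factorial) := by ring

theorem exp_borel_transform_bound' (K₂ : ℝ) (hK₂ : 0 < K₂)
    (a : ℝ → ℂ) (ha : ContDiff ℝ 1 a)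
    (ha0 : ‖a 0‖ ≤ K₂) (ha' : ∀ σ : ℝ, 0 ≤ σ → ‖deriv a σ‖ ≤ K₂)
    (σ : ℝ) (hσ : 0 ≤ σ) :
    Summable (fun n : ℕ => (1 / ((n + 1).factorial : ℂ)) * Ahat (deriv a) (n + 1) σ) ∧
    ‖Complex.exp (a 0) *
        (1 + ∑' n : ℕ, (1 / ((n + 1).factorial : ℂ)) * Ahat (deriv a) (n + 1) σ)‖ ≤
      Real.exp K₂ * Real.exp (2 * Real.sqrt K₂ * Real.sqrt σ) := by
  set x := K₂ * σ with hx
  have hx0 : 0 ≤ x := mul_nonneg hK₂.le hσ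
  set F : ℕ → ℝ := fun n => x ^ n / (n.factorial * n.factorial) with hF
  set G : ℕ → ℝ := fun m => (2 * Real.sqrt x) ^ m / m.factorial with hG
  have hGsum : Summable G := Real.summable_pow_div_factorial _
  have hFG : ∀ n, F n ≤ G (2 * n) := by
    intro n
    have hpow : (2 * Real.sqrt x) ^ (2 * n) = 4 ^ n * x ^ n := by
      rw [mul_pow, pow_mul, pow_mul]
      norm_num [Real.sq_sqrt hx0]
    have hnat : ((2 * n).factorial : ℝ) ≤ 4 ^ n * (n.factorial * n.factorial) := by
      exact_mod_cast two_mul_factorial_le n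
    simp only [hF, hG, hpow]
    rw [div_le_div_iff₀ (by positivity) (by positivity)]
    calc x ^ n * (2 * n).factorial ≤ x ^ n * (4 ^ n * (n.factorial * n.factorial)) :=
        mul_le_mul_of_nonneg_left hnat (by positivity)
      _ = 4 ^ n * x ^ n * (n.factorial * n.factorial) := by ring
  have hFsum : Summable F := by
    refine Summable.of_nonneg_of_le (fun n => by positivity) hFG ?_
    exact hGsum.comp_injective (mul_right_injective₀ two_ne_zero)
  have hterm : ∀ n : ℕ,
      ‖(1 / ((n + 1).factorial : ℂ)) * Ahat (deriv a) (n + 1) σ‖ ≤ F (n + 1) := by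
    intro n
    have h1 : ‖(1 / ((n + 1).factorial : ℂ))‖ = 1 / ((n + 1).factorial : ℝ) := by
      simp [norm_div]
    have h2 : ‖Ahat (deriv a) (n + 1) σ‖ ≤ x ^ (n + 1) / (n + 1).factorial :=
      Ahat_norm_le (deriv a) K₂ σ hK₂.le hσ ha' (n + 1)
    rw [norm_mul, h1]
    calc (1 / ((n + 1).factorial : ℝ)) * ‖Ahat (deriv a) (n + 1) σ‖
        ≤ (1 / ((n + 1).factorial : ℝ)) * (x ^ (n + 1) / (n + 1).factorial) := by
          exact mul_le_mul_of_nonneg_left h2 (by positivity)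
      _ = F (n + 1) := by simp [hF]; ring
  have hsummable :
      Summable (fun n : ℕ => (1 / ((n + 1).factorial : ℂ)) * Ahat (deriv a) (n + 1) σ) := by
    refine Summable.of_norm_bounded ?_ hterm
    exact (summable_nat_add_iff 1).2 hFsum
  refine ⟨hsummable, ?_⟩
  have hnsum : Summable (fun n : ℕ =>
      ‖(1 / ((n + 1).factorial : ℂ)) * Ahat (deriv a) (n + 1) σ‖) := by
    refine Summable.of_nonneg_of_le (fun n => norm_nonneg _) hterm ?_
    exact (summable_nat_add_iff 1).2 hFsum
  have hexp : ‖Complex.exp (a 0)‖ ≤ Real.exp K₂ := by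
    rw [Complex.norm_exp]
    exact Real.exp_le_exp.2 (le_trans (Complex.re_le_norm _) ha0)
  have hsum_le : ‖(1 : ℂ) + ∑' n : ℕ, (1 / ((n + 1).factorial : ℂ)) * Ahat (deriv a) (n + 1) σ‖
      ≤ Real.exp (2 * Real.sqrt K₂ * Real.sqrt σ) := by
    have h1 : ‖(1 : ℂ) + ∑' n : ℕ, (1 / ((n + 1).factorial : ℂ)) * Ahat (deriv a) (n + 1) σ‖
        ≤ 1 + ∑' n : ℕ, ‖(1 / ((n + 1).factorial : ℂ)) * Ahat (deriv a) (n + 1) σ‖ := by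
      refine le_trans (norm_add_le _ _) ?_
      simp only [norm_one]
      gcongr
      exact norm_tsum_le_tsum_norm hnsum
    have h2 : ∑' n : ℕ, ‖(1 / ((n + 1).factorial : ℂ)) * Ahat (deriv a) (n + 1) σ‖
        ≤ ∑' n : ℕ, F (n + 1) :=
      Summable.tsum_le_tsum hterm hnsum ((summable_nat_add_iff 1).2 hFsum)
    have h3 : 1 + ∑' n : ℕ, F (n + 1) = ∑' n, F n := by
      rw [Summable.tsum_eq_zero_add hFsum]
      simp [hF]
    have h4 : ∑' n, F n ≤ ∑' m, G m := by
      refine Summable.tsum_le_tsum_of_inj (fun n => 2 * n) (mul_right_injective₀ two_ne_zero)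
        (fun c _ => by positivity) hFG hFsum hGsum
    have h5 : ∑' m, G m = Real.exp (2 * Real.sqrt x) := by
      rw [Real.exp_eq_exp_ℝ, NormedSpace.exp_eq_tsum_div]
    have h6 : Real.sqrt x = Real.sqrt K₂ * Real.sqrt σ := Real.sqrt_mul hK₂.le σ
    calc ‖(1 : ℂ) + ∑' n : ℕ, (1 / ((n + 1).factorial : ℂ)) * Ahat (deriv a) (n + 1) σ‖
        ≤ 1 + ∑' n : ℕ, ‖(1 / ((n + 1).factorial : ℂ)) * Ahat (deriv a) (n + 1) σ‖ := h1
      _ ≤ 1 + ∑' n : ℕ, F (n + 1) := by gcongr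
      _ = ∑' n, F n := h3
      _ ≤ ∑' m, G m := h4
      _ = Real.exp (2 * Real.sqrt x) := h5
      _ = Real.exp (2 * Real.sqrt K₂ * Real.sqrt σ) := by rw [h6, mul_assoc]
  rw [norm_mul]
  exact mul_le_mul hexp hsum_le (norm_nonneg _) (Real.exp_nonneg _)

theorem exp_borel_transform_bound (K₂ : ℝ) (hK₂ : 0 < K₂)
    (a : ℝ → ℂ) (ha : ContDiff ℝ 1 a)
    (ha0 : ‖a 0‖ ≤ K₂) (ha' : ∀ σ : ℝ, 0 ≤ σ → ‖deriv a σ‖ ≤ K₂)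
    (σ : ℝ) (hσ : 0 ≤ σ) :
    Summable (fun n : ℕ => (1 / ((n + 1).factorial : ℂ)) * Ahat (deriv a) (n + 1) σ) ∧
    ‖Complex.exp (a 0) *
        (1 + ∑' n : ℕ, (1 / ((n + 1).factorial : ℂ)) * Ahat (deriv a) (n + 1) σ)‖ ≤
      Real.exp K₂ * Real.exp (2 * Real.sqrt K₂ * Real.sqrt σ) :=
  exp_borel_transform_bound' K₂ hK₂ a ha ha0 ha' σ hσ
end

section
/- Let â : [0,∞) → ℂ be continuous with |â(τ)| ≤ C e^{Kτ} for some C, K > 0, and let h > 0 with 1/h > K. Then 2∫_0^∞ â(τ²) e^{−τ²/h} dτ/(πh)^{1/2} = ∫_0^∞ b̂(τ) e^{−τ/h} dτ/h, where b̂(τ) := (2/π)∫_0^{π/2} â(τ sin²θ) dθ. -/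
open MeasureTheory

lemma hv_cot_img : (fun θ => Real.cos θ / Real.sin θ) '' Set.Ioo 0 (Real.pi/2) = Set.Ioi (0:ℝ) := by
  apply Set.eq_of_subset_of_subset
  · rintro t ⟨θ, hθ, rfl⟩
    have hs : 0 < Real.sin θ := Real.sin_pos_of_pos_of_lt_pi hθ.1 (hθ.2.trans_le (by linarith [Real.pi_pos]))
    have hcth : 0 < Real.cos θ := Real.cos_pos_of_mem_Ioo ⟨by linarith [hθ.1, Real.pi_pos], hθ.2⟩
    exact div_pos hcth hs
  · rintro t ht
    have ht' : (0:ℝ) < t := ht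
    refine ⟨Real.arctan t⁻¹, ⟨?_, Real.arctan_lt_pi_div_two _⟩, ?_⟩
    · have := Real.arctan_strictMono (show (0:ℝ) < t⁻¹ from inv_pos.mpr ht')
      simpa [Real.arctan_zero] using this
    · simp only [Real.cos_arctan, Real.sin_arctan]
      have h1 : (0:ℝ) < Real.sqrt (1 + (t⁻¹)^2) := Real.sqrt_pos.mpr (by positivity)
      field_simp

lemma hv_cot_deriv {θ : ℝ} (hθ : θ ∈ Set.Ioo 0 (Real.pi/2)) :
    HasDerivAt (fun θ => Real.cos θ / Real.sin θ) (-(Real.sin θ ^ 2)⁻¹) θ := by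
  have hs : 0 < Real.sin θ := Real.sin_pos_of_pos_of_lt_pi hθ.1 (hθ.2.trans_le (by linarith [Real.pi_pos]))
  have h := (Real.hasDerivAt_cos θ).div (Real.hasDerivAt_sin θ) hs.ne'
  refine h.congr_deriv ?_
  have hpy := Real.sin_sq_add_cos_sq θ
  field_simp
  nlinarith [hpy]

lemma hv_cot_anti : StrictAntiOn (fun θ => Real.cos θ / Real.sin θ) (Set.Ioo 0 (Real.pi/2)) := by
  apply strictAntiOn_of_deriv_neg (convex_Ioo _ _)
  · apply ContinuousOn.div Real.continuous_cos.continuousOn Real.continuous_sin.continuousOn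
    intro θ hθ
    exact (Real.sin_pos_of_pos_of_lt_pi hθ.1 (hθ.2.trans_le (by linarith [Real.pi_pos]))).ne'
  · intro θ hθ
    rw [interior_Ioo] at hθ
    rw [(hv_cot_deriv hθ).deriv]
    have hs : 0 < Real.sin θ := Real.sin_pos_of_pos_of_lt_pi hθ.1 (hθ.2.trans_le (by linarith [Real.pi_pos]))
    have : 0 < (Real.sin θ ^ 2)⁻¹ := by positivity
    linarith

lemma hv_aux_theta (c : ℝ) (hc : 0 < c) :
    ∫ θ in Set.Ioo 0 (Real.pi/2), (Real.sin θ ^ 2)⁻¹ * Real.exp (-(c * ((Real.sin θ ^ 2))⁻¹))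
      = Real.exp (-c) * (Real.sqrt (Real.pi / c) / 2) := by
  have key := integral_image_eq_integral_abs_deriv_smul (f := fun θ => Real.cos θ / Real.sin θ)
    (f' := fun θ => -(Real.sin θ ^ 2)⁻¹) measurableSet_Ioo
    (fun θ hθ => (hv_cot_deriv hθ).hasDerivWithinAt) hv_cot_anti.injOn
    (fun t => Real.exp (-(c * (1 + t^2))))
  rw [hv_cot_img] at key
  have h1 : ∫ t in Set.Ioi (0:ℝ), Real.exp (-(c * (1 + t^2)))
      = Real.exp (-c) * (Real.sqrt (Real.pi / c) / 2) := by
    have : ∀ t : ℝ, Real.exp (-(c * (1 + t^2))) = Real.exp (-c) * Real.exp (-c * t^2) := by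
      intro t; rw [← Real.exp_add]; ring_nf
    simp_rw [this]
    rw [integral_const_mul, integral_gaussian_Ioi]
  rw [h1] at key
  rw [key]
  apply setIntegral_congr_fun measurableSet_Ioo
  intro θ hθ
  have hs : 0 < Real.sin θ := Real.sin_pos_of_pos_of_lt_pi hθ.1 (hθ.2.trans_le (by linarith [Real.pi_pos]))
  have hpy := Real.sin_sq_add_cos_sq θ
  have e1 : 1 + (Real.cos θ / Real.sin θ)^2 = (Real.sin θ ^ 2)⁻¹ := by
    field_simp
    linarith
  simp only [smul_eq_mul, abs_neg, abs_inv, e1]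
  have h2 : |Real.sin θ ^ 2| = Real.sin θ ^ 2 := abs_of_pos (by positivity)
  rw [h2]

lemma hv_sq_img : (fun τ : ℝ => τ^2) '' Set.Ioi 0 = Set.Ioi (0:ℝ) := by
  apply Set.eq_of_subset_of_subset
  · rintro x ⟨τ, hτ, rfl⟩
    have h0 : (0:ℝ) < τ := hτ
    simpa using (by positivity : (0:ℝ) < τ^2)
  · rintro x hx
    exact ⟨Real.sqrt x, Real.sqrt_pos.mpr hx, Real.sq_sqrt (le_of_lt hx)⟩

lemma hv_sq_injOn : Set.InjOn (fun τ : ℝ => τ^2) (Set.Ioi 0) := by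
  intro x hx y hy hxy
  simp only [Set.mem_Ioi] at hx hy
  simp only at hxy
  nlinarith [sq_nonneg (x - y), sq_nonneg (x + y)]

lemma hv_sq_subst (g : ℝ → ℂ) :
    ∫ x in Set.Ioi (0:ℝ), g x = ∫ τ in Set.Ioi (0:ℝ), |2*τ| • g (τ^2) := by
  have key := integral_image_eq_integral_abs_deriv_smul (f := fun τ : ℝ => τ^2)
    (f' := fun τ => 2*τ) measurableSet_Ioi
    (fun τ hτ => ((hasDerivAt_pow 2 τ).congr_deriv (by ring)).hasDerivWithinAt) hv_sq_injOn g
  rw [hv_sq_img] at key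
  exact key

lemma hv_exp_decay_integrable (a : ℝ → ℂ) (ha : Continuous a) (C K m : ℝ)
    (hgrowth : ∀ τ : ℝ, 0 ≤ τ → ‖a τ‖ ≤ C * Real.exp (K * τ)) (hKm : K < m) :
    IntegrableOn (fun ζ => a ζ * (Real.exp (-(ζ * m)) : ℂ)) (Set.Ioi 0) := by
  have hbint : IntegrableOn (fun x : ℝ => C * Real.exp (-(m - K) * x)) (Set.Ioi 0) :=
    (exp_neg_integrableOn_Ioi 0 (by linarith : (0:ℝ) < m - K)).const_mul C
  apply Integrable.mono' hbint
  · exact (ha.mul (Complex.continuous_ofReal.comp (Real.continuous_exp.comp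
      (by continuity)))).aestronglyMeasurable
  · filter_upwards [ae_restrict_mem measurableSet_Ioi] with ζ hζ
    have hζ0 : (0:ℝ) ≤ ζ := le_of_lt hζ
    rw [norm_mul, Complex.norm_real, Real.norm_eq_abs, abs_of_pos (Real.exp_pos _)]
    calc ‖a ζ‖ * Real.exp (-(ζ * m)) ≤ (C * Real.exp (K * ζ)) * Real.exp (-(ζ * m)) := by
          exact mul_le_mul_of_nonneg_right (hgrowth ζ hζ0) (le_of_lt (Real.exp_pos _))
      _ = C * Real.exp (-(m - K) * ζ) := by rw [mul_assoc, ← Real.exp_add]; ring_nf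

theorem hv_half_to_one_gaussian (a : ℝ → ℂ) (ha : Continuous a)
    (C K : ℝ) (hC : 0 < C) (hK : 0 < K)
    (hgrowth : ∀ τ : ℝ, 0 ≤ τ → ‖a τ‖ ≤ C * Real.exp (K * τ))
    (h : ℝ) (hh : 0 < h) (hhK : K < 1 / h)
    (b : ℝ → ℂ)
    (hb : ∀ τ : ℝ, b τ = ((2 / Real.pi : ℝ) : ℂ) *
        ∫ θ in (0:ℝ)..(Real.pi / 2), a (τ * Real.sin θ ^ 2)) :
    2 * ∫ τ in Set.Ioi (0:ℝ), a (τ ^ 2) * (Real.exp (-(τ ^ 2) / h) : ℂ) /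
        ((Real.sqrt (Real.pi * h) : ℝ) : ℂ) =
      ∫ τ in Set.Ioi (0:ℝ), b τ * (Real.exp (-τ / h) : ℂ) / (h : ℂ) := by
  have hπ := Real.pi_pos
  have hπh : 0 < Real.pi * h := by positivity
  have hS : 0 < Real.sqrt (Real.pi * h) := Real.sqrt_pos.mpr hπh
  have hhK' : 0 < 1/h - K := by linarith
  set T : Set ℝ := Set.Ioo 0 (Real.pi/2) with hT
  -- step 1 : pull out constants
  rw [integral_div, integral_div]
  set I1 : ℂ := ∫ τ in Set.Ioi (0:ℝ), a (τ ^ 2) * (Real.exp (-(τ ^ 2) / h) : ℂ) with hI1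
  set W : ℂ := ∫ ζ in Set.Ioi (0:ℝ), a ζ * ((Real.exp (-ζ/h) / Real.sqrt ζ : ℝ) : ℂ) with hWdef
  -- step 2 : W = 2 * I1
  have hWI : W = 2 * I1 := by
    rw [hWdef, hv_sq_subst (fun ζ => a ζ * ((Real.exp (-ζ/h) / Real.sqrt ζ : ℝ) : ℂ))]
    rw [show (2:ℂ) * I1 = ∫ τ in Set.Ioi (0:ℝ),
        (2:ℂ) * (a (τ ^ 2) * (Real.exp (-(τ ^ 2) / h) : ℂ)) from (integral_const_mul 2 _).symm]
    apply setIntegral_congr_fun measurableSet_Ioi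
    intro τ hτ
    have hτ0 : (0:ℝ) < τ := hτ
    simp only [Real.sqrt_sq hτ0.le]
    rw [abs_of_pos (by linarith), Complex.real_smul]
    push_cast
    have : (τ:ℂ) ≠ 0 := Complex.ofReal_ne_zero.mpr hτ0.ne'
    field_simp
  -- the θ-ζ kernel
  set f2 : ℝ → ℝ → ℂ := fun θ ζ =>
    (Real.sin θ ^ 2)⁻¹ • (a ζ * (Real.exp (-(ζ * (h * Real.sin θ ^ 2)⁻¹)) : ℂ)) with hf2
  -- Fubini 1 integrand integrability
  have hG : Integrable (Function.uncurry fun τ θ => a (τ * Real.sin θ ^ 2) *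
      (Real.exp (-τ / h) : ℂ)) ((volume.restrict (Set.Ioi (0:ℝ))).prod (volume.restrict T)) := by
    have hbound : Integrable (fun p : ℝ × ℝ => (C * Real.exp (-(1/h - K) * p.1)) * (1:ℝ))
        ((volume.restrict (Set.Ioi (0:ℝ))).prod (volume.restrict T)) := by
      have h1 : IntegrableOn (fun τ : ℝ => C * Real.exp (-(1/h - K) * τ)) (Set.Ioi 0) :=
        (exp_neg_integrableOn_Ioi 0 hhK').const_mul C
      have h2 : IntegrableOn (fun _ : ℝ => (1:ℝ)) T :=
        integrableOn_const measure_Ioo_lt_top.ne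
      exact h1.mul_prod h2
    apply Integrable.mono' hbound
    · have hcont : Continuous (fun p : ℝ × ℝ => a (p.1 * Real.sin p.2 ^ 2) *
          (Real.exp (-p.1 / h) : ℂ)) := by
        apply Continuous.mul
        · exact ha.comp (continuous_fst.mul ((Real.continuous_sin.comp continuous_snd).pow 2))
        · exact Complex.continuous_ofReal.comp (Real.continuous_exp.comp
            (continuous_fst.neg.div_const h))
      exact hcont.aestronglyMeasurable
    · rw [Measure.prod_restrict]
      filter_upwards [ae_restrict_mem (measurableSet_Ioi.prod measurableSet_Ioo)] with p hp
      have hτ : (0:ℝ) < p.1 := hp.1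
      simp only [Function.uncurry]
      rw [norm_mul, Complex.norm_real, Real.norm_eq_abs, abs_of_pos (Real.exp_pos _)]
      calc ‖a (p.1 * Real.sin p.2 ^ 2)‖ * Real.exp (-p.1/h)
          ≤ (C * Real.exp (K * (p.1 * Real.sin p.2 ^ 2))) * Real.exp (-p.1/h) :=
            mul_le_mul_of_nonneg_right (hgrowth _ (by positivity)) (Real.exp_pos _).le
        _ ≤ (C * Real.exp (K * p.1)) * Real.exp (-p.1/h) := by
            have h1 : p.1 * Real.sin p.2 ^ 2 ≤ p.1 :=
              mul_le_of_le_one_right hτ.le (Real.sin_sq_le_one p.2)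
            have h2 : K * (p.1 * Real.sin p.2 ^ 2) ≤ K * p.1 :=
              mul_le_mul_of_nonneg_left h1 hK.le
            exact mul_le_mul_of_nonneg_right
              (mul_le_mul_of_nonneg_left (Real.exp_le_exp.mpr h2) hC.le) (Real.exp_pos _).le
        _ = (C * Real.exp (-(1/h - K) * p.1)) * 1 := by
            rw [mul_one, mul_assoc, ← Real.exp_add]; ring_nf
  -- Fubini 2 integrand integrability
  have hF2 : Integrable (Function.uncurry f2)
      ((volume.restrict T).prod (volume.restrict (Set.Ioi (0:ℝ)))) := by
    have hmeas : AEStronglyMeasurable (Function.uncurry f2)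
        ((volume.restrict T).prod (volume.restrict (Set.Ioi (0:ℝ)))) := by
      rw [show (volume.restrict T).prod (volume.restrict (Set.Ioi (0:ℝ)))
          = (volume.prod volume).restrict (T ×ˢ Set.Ioi (0:ℝ)) from Measure.prod_restrict _ _]
      apply ContinuousOn.aestronglyMeasurable _ (measurableSet_Ioo.prod measurableSet_Ioi)
      have hsin : ∀ p : ℝ × ℝ, p ∈ T ×ˢ Set.Ioi (0:ℝ) → Real.sin p.1 ^ 2 ≠ 0 := by
        intro p hp
        have := Real.sin_pos_of_pos_of_lt_pi hp.1.1 (hp.1.2.trans_le (by linarith [Real.pi_pos]))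
        positivity
      apply ContinuousOn.smul (f := fun p : ℝ × ℝ => (Real.sin p.1 ^ 2)⁻¹)
        (g := fun p : ℝ × ℝ => a p.2 * (Real.exp (-(p.2 * (h * Real.sin p.1 ^ 2)⁻¹)) : ℂ))
      · exact ((Real.continuous_sin.comp continuous_fst).pow 2).continuousOn.inv₀ hsin
      · apply ContinuousOn.mul
        · exact (ha.comp continuous_snd).continuousOn
        · apply Complex.continuous_ofReal.comp_continuousOn
          apply Real.continuous_exp.comp_continuousOn
          apply ContinuousOn.neg
          apply ContinuousOn.mul continuous_snd.continuousOn
          apply ContinuousOn.inv₀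
            (continuous_const.mul ((Real.continuous_sin.comp continuous_fst).pow 2)).continuousOn
          intro p hp
          have hs := hsin p hp
          exact mul_ne_zero hh.ne' hs
    rw [integrable_prod_iff hmeas]
    constructor
    · filter_upwards [ae_restrict_mem measurableSet_Ioo] with θ hθ
      have hsθ : 0 < Real.sin θ :=
        Real.sin_pos_of_pos_of_lt_pi hθ.1 (hθ.2.trans_le (by linarith [Real.pi_pos]))
      have hs : 0 < Real.sin θ ^ 2 := by positivity
      have hm : K < (h * Real.sin θ ^ 2)⁻¹ := by
        have h1 : h * Real.sin θ ^ 2 ≤ h := mul_le_of_le_one_right hh.le (Real.sin_sq_le_one θ)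
        have h2 : 0 < h * Real.sin θ ^ 2 := by positivity
        have h3 : h⁻¹ ≤ (h * Real.sin θ ^ 2)⁻¹ := by
          apply inv_anti₀ h2 h1
        have h4 : 1/h = h⁻¹ := one_div h
        linarith
      have hint := hv_exp_decay_integrable a ha C K _ hgrowth hm
      exact hint.smul ((Real.sin θ ^ 2)⁻¹)
    · apply Integrable.mono' (g := fun _ : ℝ => C * (1/h - K)⁻¹)
        (integrableOn_const measure_Ioo_lt_top.ne) hmeas.norm.integral_prod_right'
      filter_upwards [ae_restrict_mem measurableSet_Ioo] with θ hθ
      have hsθ : 0 < Real.sin θ :=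
        Real.sin_pos_of_pos_of_lt_pi hθ.1 (hθ.2.trans_le (by linarith [Real.pi_pos]))
      have hs : 0 < Real.sin θ ^ 2 := by positivity
      set s : ℝ := Real.sin θ ^ 2 with hsd
      set β : ℝ := (h * s)⁻¹ - K with hβd
      have hm : K < (h * s)⁻¹ := by
        have h1 : h * s ≤ h := mul_le_of_le_one_right hh.le (Real.sin_sq_le_one θ)
        have h2 : 0 < h * s := by positivity
        have h3 : h⁻¹ ≤ (h * s)⁻¹ := inv_anti₀ h2 h1
        have h4 : 1/h = h⁻¹ := one_div h
        linarith
      have hβ : 0 < β := by rw [hβd]; linarith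
      have hptw : ∀ ζ ∈ Set.Ioi (0:ℝ), ‖Function.uncurry f2 (θ, ζ)‖
          ≤ s⁻¹ * (C * Real.exp (-β * ζ)) := by
        intro ζ hζ
        have hζ0 : (0:ℝ) ≤ ζ := le_of_lt hζ
        simp only [Function.uncurry, hf2]
        rw [norm_smul, norm_mul, Complex.norm_real, Real.norm_eq_abs, Real.norm_eq_abs,
          abs_of_pos (Real.exp_pos _), abs_of_pos (inv_pos.mpr hs)]
        apply mul_le_mul_of_nonneg_left _ (inv_pos.mpr hs).le
        calc ‖a ζ‖ * Real.exp (-(ζ * (h * s)⁻¹))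
            ≤ (C * Real.exp (K * ζ)) * Real.exp (-(ζ * (h * s)⁻¹)) :=
              mul_le_mul_of_nonneg_right (hgrowth ζ hζ0) (Real.exp_pos _).le
          _ = C * Real.exp (-β * ζ) := by
              rw [mul_assoc, ← Real.exp_add, hβd]; ring_nf
      have hR : IntegrableOn (fun ζ => s⁻¹ * (C * Real.exp (-β * ζ))) (Set.Ioi (0:ℝ)) :=
        ((exp_neg_integrableOn_Ioi 0 hβ).const_mul C).const_mul s⁻¹
      have hval : ∫ ζ in Set.Ioi (0:ℝ), s⁻¹ * (C * Real.exp (-β * ζ)) = s⁻¹ * (C * β⁻¹) := by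
        rw [integral_const_mul, integral_const_mul]
        congr 1; congr 1
        have hcomp := integral_comp_mul_left_Ioi (fun x => Real.exp (-x)) 0 hβ
        rw [mul_zero, integral_exp_neg_Ioi] at hcomp
        simp only [neg_zero, Real.exp_zero, smul_eq_mul, mul_one] at hcomp
        have : ∀ ζ : ℝ, Real.exp (-β * ζ) = Real.exp (-(β * ζ)) := by intro ζ; rw [neg_mul]
        simp_rw [this]
        exact hcomp
      have hle : ∫ ζ in Set.Ioi (0:ℝ), ‖Function.uncurry f2 (θ, ζ)‖
          ≤ s⁻¹ * (C * β⁻¹) := by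
        rw [← hval]
        apply integral_mono_of_nonneg (Filter.Eventually.of_forall fun ζ => norm_nonneg _) hR
        exact (ae_restrict_iff' measurableSet_Ioi).mpr (Filter.Eventually.of_forall hptw)
      have hfin : s⁻¹ * (C * β⁻¹) ≤ C * (1/h - K)⁻¹ := by
        have hsb : s * β = 1/h - s*K := by rw [hβd]; field_simp
        have hsK : s * K ≤ K := mul_le_of_le_one_left hK.le (Real.sin_sq_le_one θ)
        have hsb2 : 1/h - K ≤ s * β := by rw [hsb]; linarith
        have hsbpos : 0 < s * β := by positivity
        have hinv : (s * β)⁻¹ ≤ (1/h - K)⁻¹ := inv_anti₀ hhK' hsb2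
        calc s⁻¹ * (C * β⁻¹) = C * (s * β)⁻¹ := by rw [mul_inv]; ring
          _ ≤ C * (1/h - K)⁻¹ := mul_le_mul_of_nonneg_left hinv hC.le
      rw [Real.norm_eq_abs, abs_of_nonneg (integral_nonneg fun ζ => norm_nonneg _)]
      exact hle.trans hfin
  -- step 4 : J = (2/π) * D
  have hJ : (∫ τ in Set.Ioi (0:ℝ), b τ * (Real.exp (-τ / h) : ℂ)) =
      ((2 / Real.pi : ℝ) : ℂ) * ∫ τ in Set.Ioi (0:ℝ), ∫ θ in T,
        a (τ * Real.sin θ ^ 2) * (Real.exp (-τ / h) : ℂ) := by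
    rw [← integral_const_mul]
    apply setIntegral_congr_fun measurableSet_Ioi
    intro τ _
    beta_reduce
    rw [hb τ]
    rw [intervalIntegral.integral_of_le (by positivity : (0:ℝ) ≤ Real.pi/2),
      integral_Ioc_eq_integral_Ioo, mul_assoc, ← integral_mul_const]
  -- step 5 : Fubini 1
  have hD1 : (∫ τ in Set.Ioi (0:ℝ), ∫ θ in T, a (τ * Real.sin θ ^ 2) * (Real.exp (-τ / h) : ℂ))
      = ∫ θ in T, ∫ τ in Set.Ioi (0:ℝ), a (τ * Real.sin θ ^ 2) * (Real.exp (-τ / h) : ℂ) :=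
    integral_integral_swap hG
  -- step 6 : per-θ substitution
  have hD2 : (∫ θ in T, ∫ τ in Set.Ioi (0:ℝ), a (τ * Real.sin θ ^ 2) * (Real.exp (-τ / h) : ℂ))
      = ∫ θ in T, ∫ ζ in Set.Ioi (0:ℝ), f2 θ ζ := by
    apply setIntegral_congr_fun measurableSet_Ioo
    intro θ hθ
    have hsθ : 0 < Real.sin θ := Real.sin_pos_of_pos_of_lt_pi hθ.1 (hθ.2.trans_le (by linarith))
    set s : ℝ := Real.sin θ ^ 2 with hsdef
    have hs : 0 < s := by positivity
    have e2 : ∀ τ : ℝ, a (τ * s) * (Real.exp (-τ / h) : ℂ) =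
        (fun x => a x * (Real.exp (-(x * (h * s)⁻¹)) : ℂ)) (τ * s) := by
      intro τ
      simp only
      have : (τ * s) * (h * s)⁻¹ = τ / h := by field_simp [hs.ne']
      rw [this, neg_div]
    calc (∫ τ in Set.Ioi (0:ℝ), a (τ * s) * (Real.exp (-τ / h) : ℂ))
        = ∫ τ in Set.Ioi (0:ℝ), (fun x => a x * (Real.exp (-(x * (h * s)⁻¹)) : ℂ)) (τ * s) :=
          integral_congr_ae (Filter.Eventually.of_forall e2)
      _ = s⁻¹ • ∫ x in Set.Ioi ((0:ℝ) * s), a x * (Real.exp (-(x * (h * s)⁻¹)) : ℂ) :=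
          integral_comp_mul_right_Ioi (fun x => a x * (Real.exp (-(x * (h * s)⁻¹)) : ℂ)) 0 hs
      _ = ∫ ζ in Set.Ioi (0:ℝ), f2 θ ζ := by
          rw [zero_mul, ← integral_smul]
  -- step 7 : Fubini 2
  have hD3 : (∫ θ in T, ∫ ζ in Set.Ioi (0:ℝ), f2 θ ζ)
      = ∫ ζ in Set.Ioi (0:ℝ), ∫ θ in T, f2 θ ζ := integral_integral_swap hF2
  -- step 8 : per-ζ evaluation
  have hD4 : (∫ ζ in Set.Ioi (0:ℝ), ∫ θ in T, f2 θ ζ)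
      = ((Real.sqrt (Real.pi * h) / 2 : ℝ) : ℂ) * W := by
    rw [hWdef, ← integral_const_mul]
    apply setIntegral_congr_fun measurableSet_Ioi
    intro ζ hζ
    beta_reduce
    have hζ0 : (0:ℝ) < ζ := hζ
    have e3 : (fun θ => f2 θ ζ) = fun θ =>
        a ζ * (((Real.sin θ ^ 2)⁻¹ * Real.exp (-((ζ/h) * ((Real.sin θ ^ 2))⁻¹)) : ℝ) : ℂ) := by
      funext θ
      rw [hf2]
      simp only
      have : ζ * (h * Real.sin θ ^ 2)⁻¹ = (ζ/h) * (Real.sin θ ^ 2)⁻¹ := by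
        rw [mul_inv, div_eq_mul_inv]; ring
      rw [this, Complex.real_smul]
      push_cast
      ring
    have hIof : (∫ θ in T, ((((Real.sin θ ^ 2)⁻¹ * Real.exp (-((ζ/h) * ((Real.sin θ ^ 2))⁻¹))) : ℝ) : ℂ))
        = (((∫ θ in T, (Real.sin θ ^ 2)⁻¹ * Real.exp (-((ζ/h) * ((Real.sin θ ^ 2))⁻¹))) : ℝ) : ℂ) :=
      integral_ofReal
    rw [e3, integral_const_mul, hIof, hv_aux_theta (ζ/h) (by positivity)]
    have e4 : Real.exp (-(ζ/h)) * (Real.sqrt (Real.pi / (ζ/h)) / 2)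
        = (Real.sqrt (Real.pi * h) / 2) * (Real.exp (-ζ/h) / Real.sqrt ζ) := by
      rw [div_div_eq_mul_div, Real.sqrt_div (by positivity) ζ, neg_div]
      ring
    rw [e4]
    push_cast
    ring
  -- assemble
  rw [hJ, hD1, hD2, hD3, hD4, hWI]
  have hconst : (2/Real.pi) * (Real.sqrt (Real.pi*h)/2) / h = 1 / Real.sqrt (Real.pi*h) := by
    have hss := Real.mul_self_sqrt hπh.le
    rw [div_eq_div_iff hh.ne' hS.ne', one_mul]
    have e0 : 2/Real.pi * (Real.sqrt (Real.pi*h)/2) * Real.sqrt (Real.pi*h)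
        = Real.sqrt (Real.pi*h) * Real.sqrt (Real.pi*h) / Real.pi := by ring
    rw [e0, hss, mul_div_cancel_left₀ _ hπ.ne']
  calc 2 * (I1 / ((Real.sqrt (Real.pi * h) : ℝ) : ℂ))
      = ((2/Real.pi * (Real.sqrt (Real.pi*h)/2) / h : ℝ) : ℂ) * (2*I1) := by
        rw [hconst]; push_cast; ring
    _ = ((2 / Real.pi : ℝ) : ℂ) * (((Real.sqrt (Real.pi * h) / 2 : ℝ) : ℂ) * (2 * I1)) / (h : ℂ) := by
        push_cast; ring
end
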